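/- arXiv:2311.00345 — 5 statements merged into one kernel-verified Lean document; each statement's English description precedes it below -/
import Mathlib

section
/- A Hausdorff topological group G is ω-balanced and a q-space if and only if for each open neighborhood O of the identity in G there is a countably compact invariant (normal) subgroup H which is of countable character in G, such that H ⊆ O, the canonical quotient mapping p : G → G/H is quasi-perfect, and the quotient space G/H is metrizable. -/
open Filter Topology Set Pointwise TopologicalSpace

universe u

section Defs

variable {X : Type*}

/-- A subset `s` of a topological space is countably compact (in the ambient space) if every
countable open cover of `s` (indexed by `ℕ`) has a finite subcover. -/
def IsCountablyCompactIn [TopologicalSpace X] (s : Set X) : Prop :=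
  ∀ U : ℕ → Set X, (∀ n, IsOpen (U n)) → s ⊆ ⋃ n, U n → ∃ t : Finset ℕ, s ⊆ ⋃ n ∈ t, U n

/-- `U` is a q-sequence at `x`: a sequence of open neighbourhoods of `x` such that every
sequence of points chosen from the `U n` has an accumulation (cluster) point in `X`. -/
def IsQSequenceAt [TopologicalSpace X] (x : X) (U : ℕ → Set X) : Prop :=
  (∀ n, IsOpen (U n) ∧ x ∈ U n) ∧
    ∀ u : ℕ → X, (∀ n, u n ∈ U n) → ∃ p : X, MapClusterPt p Filter.atTop u

/-- A space is a q-space if every point has a q-sequence. -/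
def QSpace (X : Type*) [TopologicalSpace X] : Prop :=
  ∀ x : X, ∃ U : ℕ → Set X, IsQSequenceAt x U

/-- A space is a strict q-space if every point has a q-sequence whose intersection is
sequentially compact. -/
def StrictQSpace (X : Type*) [TopologicalSpace X] : Prop :=
  ∀ x : X, ∃ U : ℕ → Set X, IsQSequenceAt x U ∧ IsSeqCompact (⋂ n, U n)

/-- `U` is a strong q-sequence at `x`: a sequence of open neighbourhoods of `x` such that every
sequence of points chosen from the `U n` has a convergent subsequence. -/
def IsStrongQSequenceAt [TopologicalSpace X] (x : X) (U : ℕ → Set X) : Prop :=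
  (∀ n, IsOpen (U n) ∧ x ∈ U n) ∧
    ∀ u : ℕ → X, (∀ n, u n ∈ U n) →
      ∃ (p : X) (φ : ℕ → ℕ), StrictMono φ ∧ Filter.Tendsto (u ∘ φ) Filter.atTop (nhds p)

/-- A space is a strong q-space if every point has a strong q-sequence. -/
def StrongQSpace (X : Type*) [TopologicalSpace X] : Prop :=
  ∀ x : X, ∃ U : ℕ → Set X, IsStrongQSequenceAt x U

/-- A subset `A` is of countable character in `X` if there is a countable family of open
neighbourhoods of `A` such that every open neighbourhood of `A` contains a member of it. -/
def HasCountableCharacter [TopologicalSpace X] (A : Set X) : Prop :=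
  ∃ U : ℕ → Set X, (∀ n, IsOpen (U n) ∧ A ⊆ U n) ∧
    ∀ W : Set X, IsOpen W → A ⊆ W → ∃ n, U n ⊆ W

/-- A topological group is ω-balanced if for every neighbourhood `U` of the identity there is
a countable family `γ` of open neighbourhoods of the identity such that for every `x` some
`V ∈ γ` satisfies `xVx⁻¹ ⊆ U`. -/
def OmegaBalanced (G : Type*) [Group G] [TopologicalSpace G] : Prop :=
  ∀ U : Set G, U ∈ nhds (1 : G) → ∃ γ : Set (Set G), γ.Countable ∧
    (∀ V ∈ γ, IsOpen V ∧ (1 : G) ∈ V) ∧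
    ∀ x : G, ∃ V ∈ γ, ∀ v ∈ V, x * v * x⁻¹ ∈ U

/-- A topological group is ω-narrow if for every open neighbourhood `V` of the identity there
is a countable set `A` with `A * V = G`. -/
def OmegaNarrow (G : Type*) [Group G] [TopologicalSpace G] : Prop :=
  ∀ V : Set G, IsOpen V → (1 : G) ∈ V → ∃ A : Set G, A.Countable ∧ A * V = Set.univ

/-- A topological group is feathered if it has a nonempty compact subset of countable
character. -/
def IsFeathered (G : Type*) [Group G] [TopologicalSpace G] : Prop :=
  ∃ K : Set G, K.Nonempty ∧ IsCompact K ∧ HasCountableCharacter K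

/-- A subgroup `H` of a topological group is neutral if for every open neighbourhood `U` of the
identity there is an open neighbourhood `V` of the identity with `HV ⊆ UH`. -/
def IsNeutralSubgroup {G : Type*} [Group G] [TopologicalSpace G] (H : Subgroup G) : Prop :=
  ∀ U : Set G, IsOpen U → (1 : G) ∈ U →
    ∃ V : Set G, IsOpen V ∧ (1 : G) ∈ V ∧ (H : Set G) * V ⊆ U * (H : Set G)

end Defs


/-! ### Auxiliary lemmas -/

section AuxTop
variable {X : Type*} [TopologicalSpace X]

lemma aux_isCountablyCompactIn_of_seq {s : Set X}
    (h : ∀ u : ℕ → X, (∀ n, u n ∈ s) → ∃ p ∈ s, MapClusterPt p Filter.atTop u) :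
    IsCountablyCompactIn s := by
  intro U hU hcov
  by_contra hno
  push_neg at hno
  have hsel : ∀ n : ℕ, ∃ x, x ∈ s ∧ x ∉ ⋃ k ∈ Finset.range (n+1), U k := by
    intro n
    have := hno (Finset.range (n+1))
    rw [Set.not_subset] at this
    simpa using this
  choose u hu1 hu2 using hsel
  obtain ⟨p, hps, hcl⟩ := h u hu1
  obtain ⟨m, hm⟩ := Set.mem_iUnion.1 (hcov hps)
  have hfreq : ∃ᶠ n in Filter.atTop, u n ∈ U m :=
    (mapClusterPt_iff_frequently.1 hcl) _ ((hU m).mem_nhds hm)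
  obtain ⟨n, hnm, hn⟩ := Filter.frequently_atTop.1 hfreq m
  exact hu2 n (Set.mem_biUnion (Finset.mem_range.2 (Nat.lt_succ_of_le hnm)) hn)

lemma aux_isClosed_tail [T1Space X] {u : ℕ → X}
    (h : ∀ p : X, ¬ MapClusterPt p Filter.atTop u) (m : ℕ) :
    IsClosed (u '' Set.Ici m) := by
  rw [← isOpen_compl_iff, isOpen_iff_mem_nhds]
  intro g hg
  have hg' := h g
  rw [mapClusterPt_iff_frequently] at hg'
  push_neg at hg'
  obtain ⟨N, hN, hNf⟩ := hg'
  obtain ⟨M, hM⟩ := Filter.eventually_atTop.1 hNf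
  have hFfin : (u '' Set.Ico m M).Finite := Set.Finite.image _ (Set.finite_Ico m M)
  have hgF : g ∉ u '' Set.Ico m M := fun ⟨n, hn, he⟩ => hg ⟨n, hn.1, he⟩
  refine Filter.mem_of_superset
    (Filter.inter_mem hN (hFfin.isClosed.isOpen_compl.mem_nhds hgF)) ?_
  rintro x ⟨hx1, hx2⟩ ⟨n, hn, rfl⟩
  by_cases hnM : n < M
  · exact hx2 ⟨n, ⟨hn, hnM⟩, rfl⟩
  · exact hM n (le_of_not_gt hnM) hx1

lemma aux_mapClusterPt_mem_closure_tail {u : ℕ → X} {p : X}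
    (h : MapClusterPt p Filter.atTop u) (m : ℕ) : p ∈ closure (u '' Set.Ici m) := by
  rw [mem_closure_iff_nhds]
  intro N hN
  obtain ⟨n, hnm, hn⟩ := Filter.frequently_atTop.1 ((mapClusterPt_iff_frequently.1 h) N hN) m
  exact ⟨u n, hn, ⟨n, hnm, rfl⟩⟩

end AuxTop

section AuxGroup
variable {G : Type*} [Group G] [TopologicalSpace G] [IsTopologicalGroup G]

lemma aux_exists_symm_sq {W : Set G} (h : W ∈ 𝓝 (1:G)) :
    ∃ S : Set G, IsOpen S ∧ (1:G) ∈ S ∧ S⁻¹ = S ∧ S * S ⊆ W := by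
  obtain ⟨V, hVo, hV1, hVW⟩ := exists_open_nhds_one_mul_subset h
  refine ⟨V ∩ V⁻¹, hVo.inter hVo.inv, ⟨hV1, by simpa using hV1⟩, ?_, ?_⟩
  · rw [Set.inter_inv, inv_inv, Set.inter_comm]
  · exact (Set.mul_subset_mul Set.inter_subset_left Set.inter_subset_left).trans hVW

lemma aux_closure_subset_sq {S : Set G} (hSo : IsOpen S) (h1 : (1:G) ∈ S) (hsym : S⁻¹ = S) :
    closure S ⊆ S * S := by
  intro x hx
  have hxS : x ∈ x • S := by
    rw [mem_smul_set_iff_inv_smul_mem]; simpa using h1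
  obtain ⟨y, hy, hyS⟩ := mem_closure_iff.1 hx (x • S) (hSo.smul x) hxS
  obtain ⟨s, hs, rfl⟩ := hy
  have hsinv : s⁻¹ ∈ S := by rw [← hsym]; exact Set.inv_mem_inv.2 hs
  have := Set.mul_mem_mul hyS hsinv
  simpa [smul_eq_mul, mul_assoc] using this

lemma aux_mapClusterPt_mul_left {u : ℕ → G} {p : G} (z : G)
    (h : MapClusterPt p Filter.atTop u) :
    MapClusterPt (z * p) Filter.atTop (fun n => z * u n) := by
  rw [mapClusterPt_iff_frequently] at h ⊢
  intro s hs
  have : (fun g : G => z * g) ⁻¹' s ∈ 𝓝 p := by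
    apply ContinuousAt.preimage_mem_nhds (by fun_prop) (by simpa using hs)
  exact h _ this

end AuxGroup

/-! ### The recursive construction of the neighbourhood chain -/

noncomputable def vAux {G : Type*} (c : Set G → ℕ → Set G) (s : Set G → Set G)
    (B : Set G) (Q : ℕ → Set G) : ℕ → ℕ → Set G
  | 0 => fun _ => s B
  | n+1 => Function.update (vAux c s B Q n) (n+1)
      (s (vAux c s B Q n n ∩ Q (n+1) ∩ c (vAux c s B Q n (Nat.unpair n).1) (Nat.unpair n).2))

noncomputable def vSeq {G : Type*} (c : Set G → ℕ → Set G) (s : Set G → Set G)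
    (B : Set G) (Q : ℕ → Set G) (n : ℕ) : Set G := vAux c s B Q n n

/-- The "target" set that `vSeq (n)` squares into. -/
noncomputable def vTgt {G : Type*} (c : Set G → ℕ → Set G) (s : Set G → Set G)
    (B : Set G) (Q : ℕ → Set G) : ℕ → Set G
  | 0 => B
  | m+1 => vSeq c s B Q m ∩ Q (m+1) ∩ c (vSeq c s B Q (Nat.unpair m).1) (Nat.unpair m).2

lemma vAux_stable {G : Type*} (c : Set G → ℕ → Set G) (s : Set G → Set G)
    (B : Set G) (Q : ℕ → Set G) : ∀ n k, k ≤ n → vAux c s B Q n k = vSeq c s B Q k := by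
  intro n
  induction n with
  | zero => intro k hk; interval_cases k; rfl
  | succ n ih =>
    intro k hk
    rcases Nat.lt_succ_iff_lt_or_eq.1 (Nat.lt_succ_of_le hk) with h | rfl
    · have hne : k ≠ n + 1 := Nat.ne_of_lt h
      show Function.update (vAux c s B Q n) (n+1) _ k = _
      rw [Function.update_of_ne hne]
      exact ih k (Nat.lt_succ_iff.1 h)
    · rfl

lemma vSeq_eq {G : Type*} (c : Set G → ℕ → Set G) (s : Set G → Set G)
    (B : Set G) (Q : ℕ → Set G) (n : ℕ) :
    vSeq c s B Q n = s (vTgt c s B Q n) := by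
  match n with
  | 0 => rfl
  | n+1 =>
    show Function.update (vAux c s B Q n) (n+1) _ (n+1) = _
    rw [Function.update_self, vAux_stable c s B Q n n le_rfl,
      vAux_stable c s B Q n (Nat.unpair n).1 (Nat.unpair_left_le n)]
    rfl

lemma vSeq_spec {G : Type*} [Group G] [TopologicalSpace G] [IsTopologicalGroup G]
    (c : Set G → ℕ → Set G) (s : Set G → Set G) (B : Set G) (Q : ℕ → Set G)
    (hB : B ∈ 𝓝 (1:G)) (hQ : ∀ n, Q n ∈ 𝓝 (1:G))
    (hc : ∀ U : Set G, IsOpen U → (1:G) ∈ U → ∀ i, IsOpen (c U i) ∧ (1:G) ∈ c U i)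
    (hs : ∀ T : Set G, T ∈ 𝓝 (1:G) →
      IsOpen (s T) ∧ (1:G) ∈ s T ∧ (s T)⁻¹ = s T ∧ s T * s T ⊆ T) :
    ∀ n, IsOpen (vSeq c s B Q n) ∧ (1:G) ∈ vSeq c s B Q n ∧
      (vSeq c s B Q n)⁻¹ = vSeq c s B Q n ∧
      vSeq c s B Q n * vSeq c s B Q n ⊆ vTgt c s B Q n := by
  intro n
  induction n using Nat.strong_induction_on with
  | _ n ih =>
    have htgt : vTgt c s B Q n ∈ 𝓝 (1:G) := by
      match n with
      | 0 => exact hB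
      | m+1 =>
        have ihm := ih m (Nat.lt_succ_self m)
        have iha := ih (Nat.unpair m).1 (Nat.lt_succ_of_le (Nat.unpair_left_le m))
        have hcm := hc _ iha.1 iha.2.1 (Nat.unpair m).2
        exact Filter.inter_mem (Filter.inter_mem (ihm.1.mem_nhds ihm.2.1) (hQ (m+1)))
          ((hcm.1).mem_nhds hcm.2)
    rw [vSeq_eq]
    exact hs _ htgt

/-! ### Forward direction -/

theorem forward_dir {G : Type*} [Group G] [TopologicalSpace G] [IsTopologicalGroup G] [T2Space G]
    (hb : OmegaBalanced G) (hq : QSpace G) {O : Set G} (hO : IsOpen O) (hO1 : (1:G) ∈ O) :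
    ∃ H : Subgroup G, H.Normal ∧ IsCountablyCompactIn (H : Set G) ∧
      HasCountableCharacter (H : Set G) ∧ (H : Set G) ⊆ O ∧
      IsClosedMap (QuotientGroup.mk : G → G ⧸ H) ∧
      (∀ y : G ⧸ H, IsCountablyCompactIn ((QuotientGroup.mk : G → G ⧸ H) ⁻¹' {y})) ∧
      MetrizableSpace (G ⧸ H) := by
  obtain ⟨Q, hQmem, hQclu⟩ := hq 1
  have hQo : ∀ n, IsOpen (Q n) := fun n => (hQmem n).1
  have hQ1 : ∀ n, (1:G) ∈ Q n := fun n => (hQmem n).2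
  -- choice of the ω-balanced witness families
  have hcex : ∀ U : Set G, ∃ f : ℕ → Set G, IsOpen U → (1:G) ∈ U →
      ((∀ i, IsOpen (f i) ∧ (1:G) ∈ f i) ∧
      ∀ x : G, ∃ i, ∀ v ∈ f i, x * v * x⁻¹ ∈ U) := by
    intro U
    by_cases h : IsOpen U ∧ (1:G) ∈ U
    · obtain ⟨γ, hγc, hγo, hγx⟩ := hb U (h.1.mem_nhds h.2)
      have hne : γ.Nonempty := by
        obtain ⟨V, hV, -⟩ := hγx 1
        exact ⟨V, hV⟩
      obtain ⟨f, hf⟩ := Set.Countable.exists_eq_range hγc hne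
      refine ⟨f, fun _ _ => ⟨fun i => hγo _ (hf ▸ Set.mem_range_self i), fun x => ?_⟩⟩
      obtain ⟨V, hVγ, hV⟩ := hγx x
      rw [hf] at hVγ
      obtain ⟨i, rfl⟩ := hVγ
      exact ⟨i, hV⟩
    · exact ⟨fun _ => Set.univ, fun h1 h2 => absurd ⟨h1, h2⟩ h⟩
  choose c hc using hcex
  -- choice of symmetric square roots
  have hsex : ∀ T : Set G, ∃ S : Set G, T ∈ 𝓝 (1:G) →
      (IsOpen S ∧ (1:G) ∈ S ∧ S⁻¹ = S ∧ S * S ⊆ T) := by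
    intro T
    by_cases h : T ∈ 𝓝 (1:G)
    · obtain ⟨S, h1, h2, h3, h4⟩ := aux_exists_symm_sq h
      exact ⟨S, fun _ => ⟨h1, h2, h3, h4⟩⟩
    · exact ⟨∅, fun h1 => absurd h1 h⟩
  choose s hs using hsex
  have hV := vSeq_spec c s (O ∩ Q 0) Q
    (Filter.inter_mem (hO.mem_nhds hO1) ((hQo 0).mem_nhds (hQ1 0)))
    (fun n => (hQo n).mem_nhds (hQ1 n))
    (fun U hU h1 i => ((hc U hU h1).1 i)) hs
  set V : ℕ → Set G := vSeq c s (O ∩ Q 0) Q with hVdef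
  have hVopen : ∀ n, IsOpen (V n) := fun n => (hV n).1
  have hV1 : ∀ n, (1:G) ∈ V n := fun n => (hV n).2.1
  have hVsym : ∀ n, (V n)⁻¹ = V n := fun n => (hV n).2.2.1
  have hVsq : ∀ n, V n * V n ⊆ vTgt c s (O ∩ Q 0) Q n := fun n => (hV n).2.2.2
  have hVsub : ∀ n, V n ⊆ vTgt c s (O ∩ Q 0) Q n := by
    intro n x hx
    have : x * 1 ∈ V n * V n := Set.mul_mem_mul hx (hV1 n)
    rw [mul_one] at this
    exact hVsq n this
  have hV0 : V 0 ⊆ O ∩ Q 0 := hVsub 0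
  have hVsucc : ∀ m, V (m+1) ⊆ V m ∩ Q (m+1) ∩
      c (V (Nat.unpair m).1) (Nat.unpair m).2 := fun m => hVsub (m+1)
  have hVsqsucc : ∀ m, V (m+1) * V (m+1) ⊆ V m := fun m =>
    (hVsq (m+1)).trans (Set.inter_subset_left.trans Set.inter_subset_left)
  have hmono : ∀ m, V (m+1) ⊆ V m := fun m =>
    (hVsucc m).trans (Set.inter_subset_left.trans Set.inter_subset_left)
  have hanti : ∀ m n, m ≤ n → V n ⊆ V m := by
    intro m n hmn
    induction n with
    | zero => rw [Nat.le_zero.1 hmn]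
    | succ n ih =>
      rcases Nat.lt_succ_iff_lt_or_eq.1 (Nat.lt_succ_of_le hmn) with h | rfl
      · exact (hmono n).trans (ih (Nat.lt_succ_iff.1 h))
      · rfl
  have hVQ : ∀ n, V n ⊆ Q n := by
    intro n
    match n with
    | 0 => exact hV0.trans Set.inter_subset_right
    | m+1 => exact (hVsucc m).trans (Set.inter_subset_left.trans Set.inter_subset_right)
  have hclosureV : ∀ m, closure (V (m+1)) ⊆ V m := fun m =>
    (aux_closure_subset_sq (hVopen (m+1)) (hV1 (m+1)) (hVsym (m+1))).trans (hVsqsucc m)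
  set Hset : Set G := ⋂ n, V n with hHdef
  have hHsubV : ∀ n, Hset ⊆ V n := fun n => Set.iInter_subset _ n
  -- cluster points of sequences running through the V n
  have hclu : ∀ u : ℕ → G, (∀ n, u n ∈ V n) → ∃ p ∈ Hset, MapClusterPt p Filter.atTop u := by
    intro u hu
    obtain ⟨p, hp⟩ := hQclu u (fun n => hVQ n (hu n))
    refine ⟨p, ?_, hp⟩
    rw [hHdef, Set.mem_iInter]
    intro n
    have h1 : p ∈ closure (u '' Set.Ici (n+1)) := aux_mapClusterPt_mem_closure_tail hp (n+1)
    have h2 : u '' Set.Ici (n+1) ⊆ V (n+1) := by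
      rintro x ⟨k, hk, rfl⟩
      exact hanti (n+1) k hk (hu k)
    exact hclosureV n ((closure_mono h2) h1)
  -- the subgroup
  have hone : (1:G) ∈ Hset := Set.mem_iInter.2 hV1
  have hmul : ∀ a ∈ Hset, ∀ b ∈ Hset, a * b ∈ Hset := by
    intro a ha b hb
    rw [Set.mem_iInter]
    intro n
    exact hVsqsucc n (Set.mul_mem_mul (hHsubV (n+1) ha) (hHsubV (n+1) hb))
  have hinv : ∀ a ∈ Hset, a⁻¹ ∈ Hset := by
    intro a ha
    rw [Set.mem_iInter]
    intro n
    rw [← hVsym n]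
    exact Set.inv_mem_inv.2 (hHsubV n ha)
  let H : Subgroup G :=
    { carrier := Hset
      one_mem' := hone
      mul_mem' := fun ha hb => hmul _ ha _ hb
      inv_mem' := fun ha => hinv _ ha }
  have hHcoe : (H : Set G) = Hset := rfl
  have hNormal : H.Normal := by
    constructor
    intro a ha g
    have ha' : a ∈ Hset := ha
    suffices hsuff : g * a * g⁻¹ ∈ Hset by exact hsuff
    rw [Set.mem_iInter]
    intro k
    obtain ⟨i, hi⟩ := (hc (V k) (hVopen k) (hV1 k)).2 g
    have hsub : V (Nat.pair k i + 1) ⊆ c (V k) i := by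
      have := (hVsucc (Nat.pair k i)).trans Set.inter_subset_right
      rwa [Nat.unpair_pair] at this
    exact hi a (hsub (hHsubV _ ha))
  haveI : H.Normal := hNormal
  -- countable character
  have hchar : ∀ W : Set G, IsOpen W → Hset ⊆ W → ∃ n, V n ⊆ W := by
    intro W hWo hWsub
    by_contra hno
    push_neg at hno
    have hsel : ∀ n, ∃ x, x ∈ V n ∧ x ∉ W := by
      intro n
      obtain ⟨x, hx1, hx2⟩ := Set.not_subset.1 (hno n)
      exact ⟨x, hx1, hx2⟩
    choose u hu1 hu2 using hsel
    obtain ⟨p, hpH, hpc⟩ := hclu u hu1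
    have h1 : p ∈ closure (u '' Set.Ici 0) := aux_mapClusterPt_mem_closure_tail hpc 0
    have h2 : u '' Set.Ici 0 ⊆ Wᶜ := by rintro x ⟨k, -, rfl⟩; exact hu2 k
    have : p ∈ Wᶜ := by
      have := (closure_mono h2) h1
      rwa [closure_eq_iff_isClosed.2 (isClosed_compl_iff.2 hWo)] at this
    exact this (hWsub hpH)
  -- closed map
  have hclosedmap : IsClosedMap (QuotientGroup.mk : G → G ⧸ H) := by
    intro F hF
    rw [← (QuotientGroup.isQuotientMap_mk H).isClosed_preimage,
      QuotientGroup.preimage_image_mk_eq_mul]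
    refine isClosed_of_closure_subset ?_
    intro z hz
    have hsel : ∀ n : ℕ, ∃ fh : G × G, fh.1 ∈ F ∧ fh.2 ∈ Hset ∧
        fh.1 * fh.2 ∈ z • V (n+1) := by
      intro n
      have hzmem : z ∈ z • V (n+1) := by
        rw [mem_smul_set_iff_inv_smul_mem]; simpa using hV1 (n+1)
      obtain ⟨w, hw1, hw2⟩ := mem_closure_iff.1 hz _ ((hVopen (n+1)).smul z) hzmem
      obtain ⟨f, hf, h, hh, rfl⟩ := hw2
      exact ⟨(f, h), hf, hh, hw1⟩
    choose fh hf hh hmem using hsel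
    have hgV : ∀ n, z⁻¹ * (fh n).1 ∈ V n := by
      intro n
      have h1 : z⁻¹ * ((fh n).1 * (fh n).2) ∈ V (n+1) := by
        have := hmem n
        rwa [mem_smul_set_iff_inv_smul_mem, smul_eq_mul] at this
      have h2 : ((fh n).2)⁻¹ ∈ V (n+1) := hHsubV (n+1) (hinv _ (hh n))
      have h3 := Set.mul_mem_mul h1 h2
      have heq : z⁻¹ * ((fh n).1 * (fh n).2) * ((fh n).2)⁻¹ = z⁻¹ * (fh n).1 := by
        group
      rw [heq] at h3
      exact hVsqsucc n h3
    obtain ⟨p, hpH, hpc⟩ := hclu _ hgV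
    have hcl2 : MapClusterPt (z * p) Filter.atTop (fun n => (fh n).1) := by
      have := aux_mapClusterPt_mul_left z hpc
      have heq : (fun n => z * (z⁻¹ * (fh n).1)) = fun n => (fh n).1 := by
        funext n; group
      rwa [heq] at this
    have hzpF : z * p ∈ F := by
      have h1 := aux_mapClusterPt_mem_closure_tail hcl2 0
      have h2 : (fun n => (fh n).1) '' Set.Ici 0 ⊆ F := by
        rintro x ⟨k, -, rfl⟩; exact hf k
      have := (closure_mono h2) h1
      rwa [hF.closure_eq] at this
    have := Set.mul_mem_mul hzpF (hinv _ hpH)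
    rwa [mul_inv_cancel_right] at this
  -- fibers are countably compact
  have hfib : ∀ y : G ⧸ H, IsCountablyCompactIn ((QuotientGroup.mk : G → G ⧸ H) ⁻¹' {y}) := by
    intro y
    obtain ⟨x, rfl⟩ := QuotientGroup.mk_surjective y
    apply aux_isCountablyCompactIn_of_seq
    intro u hu
    have hg : ∀ n, x⁻¹ * u n ∈ V n := by
      intro n
      have h1 := hu n
      rw [Set.mem_preimage, Set.mem_singleton_iff] at h1
      have h2 : x⁻¹ * u n ∈ H := QuotientGroup.eq.1 h1.symm
      exact hHsubV n h2
    obtain ⟨p, hpH, hpc⟩ := hclu _ hg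
    refine ⟨x * p, ?_, ?_⟩
    · rw [Set.mem_preimage, Set.mem_singleton_iff]
      refine (QuotientGroup.eq.2 ?_).symm
      simpa using (show p ∈ H from hpH)
    · have := aux_mapClusterPt_mul_left x hpc
      have heq : (fun n => x * (x⁻¹ * u n)) = u := by
        funext n; group
      rwa [heq] at this
  -- metrizability of the quotient
  have hbasis : (𝓝 (1 : G ⧸ H)).HasBasis (fun _ : ℕ => True)
      (fun n => (QuotientGroup.mk : G → G ⧸ H) '' V n) := by
    constructor
    intro t
    constructor
    · intro ht
      obtain ⟨t', ht's, ht'o, ht'1⟩ := mem_nhds_iff.1 ht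
      have hpre : Hset ⊆ (QuotientGroup.mk : G → G ⧸ H) ⁻¹' t' := by
        intro h hhH
        rw [Set.mem_preimage]
        have : (QuotientGroup.mk h : G ⧸ H) = 1 := (QuotientGroup.eq_one_iff h).2 hhH
        rw [this]; exact ht'1
      obtain ⟨n, hn⟩ := hchar _ (ht'o.preimage QuotientGroup.continuous_mk) hpre
      exact ⟨n, trivial, (Set.image_subset_iff.2 hn).trans ht's⟩
    · rintro ⟨n, -, hsub⟩
      refine Filter.mem_of_superset ?_ hsub
      have h1 : (1 : G ⧸ H) = QuotientGroup.mk (1 : G) := rfl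
      rw [h1]
      exact (QuotientGroup.isOpenMap_coe).image_mem_nhds ((hVopen n).mem_nhds (hV1 n))
  haveI : (𝓝 (1 : G ⧸ H)).IsCountablyGenerated := hbasis.isCountablyGenerated
  haveI : T1Space (G ⧸ H) := by
    constructor
    intro y
    obtain ⟨x, rfl⟩ := QuotientGroup.mk_surjective y
    have := hclosedmap {x} isClosed_singleton
    rwa [Set.image_singleton] at this
  have hmetr : MetrizableSpace (G ⧸ H) := by
    letI : UniformSpace (G ⧸ H) := IsTopologicalGroup.rightUniformSpace _
    haveI : (uniformity (G ⧸ H)).IsCountablyGenerated := by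
      rw [uniformity_eq_comap_nhds_one']
      exact Filter.comap.isCountablyGenerated _ _
    exact UniformSpace.metrizableSpace
  -- countable compactness of H
  have hHcc : IsCountablyCompactIn Hset := by
    apply aux_isCountablyCompactIn_of_seq
    intro u hu
    exact hclu u (fun n => hHsubV n (hu n))
  refine ⟨H, hNormal, ?_, ?_, ?_, hclosedmap, hfib, hmetr⟩
  · rwa [hHcoe]
  · rw [hHcoe]
    exact ⟨V, fun n => ⟨hVopen n, hHsubV n⟩, hchar⟩
  · rw [hHcoe]
    exact (hHsubV 0).trans (hV0.trans Set.inter_subset_left)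

/-! ### Backward direction -/

theorem backward_qspace {G : Type*} [Group G] [TopologicalSpace G] [IsTopologicalGroup G]
    [T2Space G]
    (hR : ∀ O : Set G, IsOpen O → (1 : G) ∈ O →
      ∃ H : Subgroup G, H.Normal ∧ IsCountablyCompactIn (H : Set G) ∧
        HasCountableCharacter (H : Set G) ∧ (H : Set G) ⊆ O ∧
        IsClosedMap (QuotientGroup.mk : G → G ⧸ H) ∧
        (∀ y : G ⧸ H, IsCountablyCompactIn ((QuotientGroup.mk : G → G ⧸ H) ⁻¹' {y})) ∧
        MetrizableSpace (G ⧸ H)) : QSpace G := by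
  intro x
  obtain ⟨H, hN, -, -, -, hclosed, hfib, hmetr⟩ := hR Set.univ isOpen_univ (Set.mem_univ 1)
  haveI := hN
  haveI := hmetr
  letI : PseudoMetricSpace (G ⧸ H) := TopologicalSpace.pseudoMetrizableSpacePseudoMetric _
  obtain ⟨s, hsb⟩ := (𝓝 ((QuotientGroup.mk x : G ⧸ H))).exists_antitone_basis
  refine ⟨fun n => (QuotientGroup.mk : G → G ⧸ H) ⁻¹' (interior (s n)), ⟨?_, ?_⟩⟩
  · intro n
    refine ⟨isOpen_interior.preimage QuotientGroup.continuous_mk, ?_⟩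
    rw [Set.mem_preimage, mem_interior_iff_mem_nhds]
    exact hsb.1.mem_of_mem trivial
  · intro u hu
    have htends : Filter.Tendsto (fun n => (QuotientGroup.mk (u n) : G ⧸ H)) Filter.atTop
        (𝓝 (QuotientGroup.mk x)) := by
      apply hsb.tendsto
      intro n
      exact interior_subset (hu n)
    by_contra hno
    push_neg at hno
    have htail : ∀ m : ℕ, IsClosed (u '' Set.Ici m) := aux_isClosed_tail hno
    have hcov : (QuotientGroup.mk : G → G ⧸ H) ⁻¹' {QuotientGroup.mk x} ⊆
        ⋃ m, (u '' Set.Ici m)ᶜ := by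
      intro g hgF
      rw [Set.mem_iUnion]
      by_contra hg
      push_neg at hg
      apply hno g
      rw [mapClusterPt_iff_frequently]
      intro N hN
      rw [Filter.frequently_atTop]
      intro m
      have := hg m
      rw [Set.notMem_compl_iff] at this
      obtain ⟨k, hk, hkg⟩ := this
      exact ⟨k, hk, by rw [hkg]; exact mem_of_mem_nhds hN⟩
    obtain ⟨t, ht⟩ := hfib (QuotientGroup.mk x) (fun m => (u '' Set.Ici m)ᶜ)
      (fun m => (htail m).isOpen_compl) hcov
    set M : ℕ := t.sup id with hM
    have hdisj : (QuotientGroup.mk : G → G ⧸ H) ⁻¹' {QuotientGroup.mk x} ∩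
        u '' Set.Ici M = ∅ := by
      rw [Set.eq_empty_iff_forall_notMem]
      rintro g ⟨hg1, hg2⟩
      obtain ⟨m, hmt, hm⟩ := Set.mem_iUnion₂.1 (ht hg1)
      apply hm
      obtain ⟨k, hk, rfl⟩ := hg2
      exact ⟨k, le_trans (Finset.le_sup (f := id) hmt) hk, rfl⟩
    have himg : IsClosed ((QuotientGroup.mk : G → G ⧸ H) '' (u '' Set.Ici M)) :=
      hclosed _ (htail M)
    have hxnot : (QuotientGroup.mk x : G ⧸ H) ∉
        (QuotientGroup.mk : G → G ⧸ H) '' (u '' Set.Ici M) := by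
      rintro ⟨g, hg, hgx⟩
      rw [Set.eq_empty_iff_forall_notMem] at hdisj
      exact hdisj g ⟨by rw [Set.mem_preimage, Set.mem_singleton_iff]; exact hgx, hg⟩
    have hev := htends (himg.isOpen_compl.mem_nhds hxnot)
    rw [Filter.mem_map, Filter.mem_atTop_sets] at hev
    obtain ⟨a, ha⟩ := hev
    have := ha (max a M) (le_max_left _ _)
    exact this ⟨u (max a M), ⟨max a M, Set.mem_Ici.2 (le_max_right _ _), rfl⟩, rfl⟩

theorem backward_balanced {G : Type*} [Group G] [TopologicalSpace G] [IsTopologicalGroup G]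
    [T2Space G]
    (hR : ∀ O : Set G, IsOpen O → (1 : G) ∈ O →
      ∃ H : Subgroup G, H.Normal ∧ IsCountablyCompactIn (H : Set G) ∧
        HasCountableCharacter (H : Set G) ∧ (H : Set G) ⊆ O ∧
        IsClosedMap (QuotientGroup.mk : G → G ⧸ H) ∧
        (∀ y : G ⧸ H, IsCountablyCompactIn ((QuotientGroup.mk : G → G ⧸ H) ⁻¹' {y})) ∧
        MetrizableSpace (G ⧸ H)) : OmegaBalanced G := by
  intro U hU
  obtain ⟨O, hOU, hOo, hO1⟩ := mem_nhds_iff.1 hU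
  obtain ⟨H, hN, -, -, hHO, hclosed, -, hmetr⟩ := hR O hOo hO1
  haveI := hN
  haveI := hmetr
  letI : PseudoMetricSpace (G ⧸ H) := TopologicalSpace.pseudoMetrizableSpacePseudoMetric _
  have hWclosed : IsClosed ((QuotientGroup.mk : G → G ⧸ H) '' Oᶜ) := hclosed _ hOo.isClosed_compl
  have hW1 : (1 : G ⧸ H) ∉ (QuotientGroup.mk : G → G ⧸ H) '' Oᶜ := by
    rintro ⟨g, hg, hg1⟩
    exact hg (hHO ((QuotientGroup.eq_one_iff g).1 hg1))
  have hWpre : (QuotientGroup.mk : G → G ⧸ H) ⁻¹' ((QuotientGroup.mk : G → G ⧸ H) '' Oᶜ)ᶜ ⊆ O := by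
    intro g hg
    by_contra hgO
    exact hg (Set.mem_image_of_mem _ hgO)
  obtain ⟨s, hsb⟩ := (𝓝 (1 : G ⧸ H)).exists_antitone_basis
  refine ⟨Set.range (fun n => (QuotientGroup.mk : G → G ⧸ H) ⁻¹' (interior (s n))),
    Set.countable_range _, ?_, ?_⟩
  · rintro V ⟨n, rfl⟩
    refine ⟨isOpen_interior.preimage QuotientGroup.continuous_mk, ?_⟩
    rw [Set.mem_preimage, mem_interior_iff_mem_nhds]
    exact hsb.1.mem_of_mem trivial
  · intro x
    have hcont : Continuous (fun y : G ⧸ H =>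
        (QuotientGroup.mk x : G ⧸ H) * y * (QuotientGroup.mk x)⁻¹) := by
      fun_prop
    have hWnhds : ((QuotientGroup.mk : G → G ⧸ H) '' Oᶜ)ᶜ ∈ 𝓝 (1 : G ⧸ H) := by
      apply hWclosed.isOpen_compl.mem_nhds hW1
    have hprenhds : (fun y : G ⧸ H =>
        (QuotientGroup.mk x : G ⧸ H) * y * (QuotientGroup.mk x)⁻¹) ⁻¹'
        ((QuotientGroup.mk : G → G ⧸ H) '' Oᶜ)ᶜ ∈ 𝓝 (1 : G ⧸ H) := by
      apply hcont.continuousAt.preimage_mem_nhds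
      simpa using hWnhds
    obtain ⟨n, -, hn⟩ := hsb.1.mem_iff.1 hprenhds
    refine ⟨(QuotientGroup.mk : G → G ⧸ H) ⁻¹' (interior (s n)), ⟨n, rfl⟩, ?_⟩
    intro v hv
    apply hOU
    apply hWpre
    have h1 : (QuotientGroup.mk v : G ⧸ H) ∈ s n := interior_subset hv
    have h2 := hn h1
    rw [Set.mem_preimage] at h2 ⊢
    have heq : (QuotientGroup.mk (x * v * x⁻¹) : G ⧸ H) =
        (QuotientGroup.mk x : G ⧸ H) * (QuotientGroup.mk v) * (QuotientGroup.mk x)⁻¹ := rfl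
    rw [heq]
    exact h2

theorem omegaBalanced_and_qSpace_iff (G : Type*) [Group G] [TopologicalSpace G] [IsTopologicalGroup G] [T2Space G] :
    (OmegaBalanced G ∧ QSpace G) ↔
      ∀ O : Set G, IsOpen O → (1 : G) ∈ O →
        ∃ H : Subgroup G, H.Normal ∧ IsCountablyCompactIn (H : Set G) ∧
          HasCountableCharacter (H : Set G) ∧ (H : Set G) ⊆ O ∧
          IsClosedMap (QuotientGroup.mk : G → G ⧸ H) ∧
          (∀ y : G ⧸ H, IsCountablyCompactIn ((QuotientGroup.mk : G → G ⧸ H) ⁻¹' {y})) ∧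
          MetrizableSpace (G ⧸ H) := by
  constructor
  · rintro ⟨hb, hq⟩ O hO hO1
    exact forward_dir hb hq hO hO1
  · intro hR
    exact ⟨backward_balanced hR, backward_qspace hR⟩
end

section
/- A Hausdorff topological group G is ω-narrow and a q-space if and only if for each open neighborhood O of the identity in G there is a countably compact invariant (normal) subgroup H which is of countable character in G, such that H ⊆ O, the canonical quotient mapping p : G → G/H is quasi-perfect, and the quotient space G/H is separable and metrizable. -/
open Filter Topology Set Pointwise TopologicalSpace

universe u

section Helper

variable {X : Type*} [TopologicalSpace X]

theorem mapClusterPt_frequently' {u : ℕ → X} {z : X} (h : MapClusterPt z atTop u)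
    {N : Set X} (hN : N ∈ 𝓝 z) : ∀ m : ℕ, ∃ n, m ≤ n ∧ u n ∈ N := by
  have h2 := (mapClusterPt_iff_frequently.1 h) N hN
  intro m
  rcases (frequently_atTop.1 h2) m with ⟨n, hn, hn'⟩
  exact ⟨n, hn, hn'⟩

theorem mem_closure_of_mapClusterPt' {u : ℕ → X} {z : X} {S : Set X}
    (h : MapClusterPt z atTop u) (hS : ∃ m : ℕ, ∀ n, m ≤ n → u n ∈ S) : z ∈ closure S := by
  rcases hS with ⟨m, hm⟩
  rw [mem_closure_iff_nhds]
  intro N hN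
  rcases mapClusterPt_frequently' h hN m with ⟨n, hn, hn'⟩
  exact ⟨u n, hn', hm n hn⟩

theorem IsCountablyCompactIn.exists_clusterPt {s : Set X} (hs : IsCountablyCompactIn s)
    (u : ℕ → X) (hu : ∀ n, u n ∈ s) : ∃ z ∈ s, MapClusterPt z atTop u := by
  by_contra hcon
  push_neg at hcon
  have hcov : s ⊆ ⋃ m, (closure (u '' Set.Ici m))ᶜ := by
    intro x hx
    have h2 := hcon x hx
    rw [mapClusterPt_iff_frequently] at h2
    push_neg at h2
    rcases h2 with ⟨N, hN, hN'⟩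
    rw [eventually_atTop] at hN'
    rcases hN' with ⟨M, hM⟩
    refine Set.mem_iUnion.2 ⟨M, ?_⟩
    intro hmem
    rcases mem_closure_iff_nhds.1 hmem N hN with ⟨y, hyN, n, hn, rfl⟩
    exact hM n hn hyN
  rcases hs _ (fun m => (isClosed_closure).isOpen_compl) hcov with ⟨t, ht⟩
  have hM := ht (hu (t.sup id))
  rcases Set.mem_iUnion₂.1 hM with ⟨m, hmt, hm⟩
  exact hm (subset_closure ⟨t.sup id, Finset.le_sup (f := id) hmt, rfl⟩)

theorem isCountablyCompactIn_of_clusterPt {s : Set X}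
    (h : ∀ u : ℕ → X, (∀ n, u n ∈ s) → ∃ z ∈ s, MapClusterPt z atTop u) :
    IsCountablyCompactIn s := by
  intro U hUo hUc
  by_contra hcon
  push_neg at hcon
  have hpick : ∀ n : ℕ, ∃ x, x ∈ s ∧ x ∉ ⋃ i ∈ Finset.range (n+1), U i := by
    intro n
    have h2 := hcon (Finset.range (n+1))
    rw [Set.not_subset] at h2
    rcases h2 with ⟨x, hx, hx'⟩
    exact ⟨x, hx, hx'⟩
  choose v hv1 hv2 using hpick
  rcases h v hv1 with ⟨z, hz, hcl⟩
  rcases Set.mem_iUnion.1 (hUc hz) with ⟨m, hm⟩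
  rcases mapClusterPt_frequently' hcl ((hUo m).mem_nhds hm) m with ⟨n, hn, hn'⟩
  exact hv2 n (Set.mem_biUnion (Finset.mem_range.2 (Nat.lt_succ_of_le hn)) hn')

theorem isClosed_image_Ici_of_no_clusterPt [T1Space X] {u : ℕ → X}
    (h : ∀ z, ¬ MapClusterPt z atTop u) (m : ℕ) : IsClosed (u '' Set.Ici m) := by
  refine isClosed_of_closure_subset ?_
  intro z hz
  have h2 := h z
  rw [mapClusterPt_iff_frequently] at h2
  push_neg at h2
  rcases h2 with ⟨N, hN, hN'⟩
  rw [eventually_atTop] at hN'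
  rcases hN' with ⟨M, hM⟩
  have hzint : z ∈ interior N := mem_interior_iff_mem_nhds.2 hN
  have hz2 : z ∈ closure (u '' Set.Ico m M) := by
    rw [mem_closure_iff]
    intro o ho hzo
    rcases mem_closure_iff.1 hz (o ∩ interior N) (ho.inter isOpen_interior) ⟨hzo, hzint⟩ with
      ⟨y, ⟨hyo, hyN⟩, ⟨n, hn, rfl⟩⟩
    have hnM : n < M := by
      by_contra hnM
      exact hM n (le_of_not_gt hnM) (interior_subset hyN)
    exact ⟨u n, hyo, ⟨n, ⟨hn, hnM⟩, rfl⟩⟩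
  have hfin : (u '' Set.Ico m M).Finite := (Set.finite_Ico m M).image u
  have := hfin.isClosed.closure_subset hz2
  exact Set.image_mono (fun n hn => hn.1) this

end Helper

section GroupHelper

variable {G : Type*} [Group G] [TopologicalSpace G] [IsTopologicalGroup G]

theorem exists_sym_sqrt' {W : Set G} (hW : W ∈ 𝓝 (1 : G)) :
    ∃ S : Set G, IsOpen S ∧ (1:G) ∈ S ∧ S⁻¹ = S ∧ S * S ⊆ W := by
  rcases exists_open_nhds_one_mul_subset hW with ⟨V, hVo, hV1, hVm⟩
  refine ⟨V ∩ V⁻¹, hVo.inter hVo.inv, ⟨hV1, by simpa using hV1⟩, ?_, ?_⟩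
  · rw [Set.inter_inv, inv_inv, Set.inter_comm]
  · intro x hx
    rcases Set.mem_mul.1 hx with ⟨a, ha, b, hb, rfl⟩
    exact hVm (Set.mul_mem_mul ha.1 hb.1)

theorem closure_subset_mul' {S W : Set G} (hWo : IsOpen W) (h1 : (1:G) ∈ W) :
    closure S ⊆ S * W⁻¹ := by
  intro z hz
  have hN : (fun y => z⁻¹ * y) ⁻¹' W ∈ 𝓝 z := by
    refine IsOpen.mem_nhds (hWo.preimage (continuous_const.mul continuous_id)) ?_
    simpa using h1
  rcases mem_closure_iff_nhds.1 hz _ hN with ⟨a, haW, haS⟩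
  have hrw : z = a * (z⁻¹ * a)⁻¹ := by group
  rw [hrw]
  exact Set.mul_mem_mul haS (Set.inv_mem_inv.2 haW)

theorem totallyBounded_of_clusterPt' {s W : Set G} (hWo : IsOpen W) (h1 : (1:G) ∈ W)
    (hsym : W⁻¹ = W)
    (hclu : ∀ u : ℕ → G, (∀ n, u n ∈ s) → ∃ z ∈ s, MapClusterPt z Filter.atTop u) :
    ∃ F : Set G, F.Finite ∧ s ⊆ F * W := by
  by_contra hcon
  push_neg at hcon
  have hpick : ∀ F : Finset G, ∃ x, x ∈ s ∧ ∀ y ∈ F, y⁻¹ * x ∉ W := by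
    intro F
    have h2 := hcon F F.finite_toSet
    rw [Set.not_subset] at h2
    rcases h2 with ⟨x, hx, hx'⟩
    refine ⟨x, hx, fun y hy hyW => hx' ?_⟩
    exact ⟨y, hy, y⁻¹ * x, hyW, by group⟩
  choose pick hpick1 hpick2 using hpick
  haveI := Classical.decEq G
  let S : ℕ → Finset G := fun n => Nat.rec ∅ (fun _ Sn => insert (pick Sn) Sn) n
  have hSs : ∀ n, S (n+1) = insert (pick (S n)) (S n) := fun n => rfl
  set u : ℕ → G := fun n => pick (S n) with hu
  have humem : ∀ i n, i < n → u i ∈ S n := by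
    intro i n
    induction n with
    | zero => omega
    | succ n ih =>
      intro h
      rw [hSs]
      rcases Nat.lt_succ_iff_lt_or_eq.1 h with h | h
      · exact Finset.mem_insert_of_mem (ih h)
      · subst h; exact Finset.mem_insert_self _ _
  rcases hclu u (fun n => hpick1 _) with ⟨z, _, hcl⟩
  obtain ⟨W2, hW2o, hW21, hW2sym, hW2sq⟩ := exists_sym_sqrt' (hWo.mem_nhds h1)
  have hN : (fun y => z⁻¹ * y) ⁻¹' W2 ∈ 𝓝 z := by
    refine IsOpen.mem_nhds (hW2o.preimage (continuous_const.mul continuous_id)) ?_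
    simpa using hW21
  rcases mapClusterPt_frequently' hcl hN 0 with ⟨i, _, hi⟩
  rcases mapClusterPt_frequently' hcl hN (i+1) with ⟨j, hj, hjW⟩
  have hmem : (u i)⁻¹ * u j ∈ W := by
    have hiW : (z⁻¹ * u i)⁻¹ ∈ W2 := by
      have hi2 : z⁻¹ * u i ∈ W2 := hi
      have h3 := Set.inv_mem_inv.2 hi2
      rwa [hW2sym] at h3
    have hrw : (u i)⁻¹ * u j = (z⁻¹ * u i)⁻¹ * (z⁻¹ * u j) := by group
    rw [hrw]
    exact hW2sq (Set.mul_mem_mul hiW hjW)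
  exact hpick2 (S j) (u i) (humem i j (Nat.lt_of_succ_le hj)) hmem

theorem secondCountable_of_dense_of_base {X : Type*} [Group X] [TopologicalSpace X]
    [IsTopologicalGroup X] {D : Set X} (hDc : D.Countable) (hDd : Dense D)
    {W : ℕ → Set X} (hWo : ∀ n, IsOpen (W n)) (hW1 : ∀ n, (1:X) ∈ W n)
    (hbase : ∀ N : Set X, IsOpen N → (1:X) ∈ N → ∃ n, W n ⊆ N) :
    SecondCountableTopology X := by
  set B : Set (Set X) := (fun p : X × ℕ => (fun y => p.1 * y) '' W p.2) '' (D ×ˢ (Set.univ : Set ℕ))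
    with hB
  have hBc : B.Countable := (hDc.prod Set.countable_univ).image _
  refine TopologicalSpace.IsTopologicalBasis.secondCountableTopology (b := B) ?_ hBc
  refine TopologicalSpace.isTopologicalBasis_of_isOpen_of_nhds ?_ ?_
  · rintro _ ⟨⟨d, n⟩, ⟨hd, -⟩, rfl⟩
    exact (Homeomorph.mulLeft d).isOpenMap _ (hWo n)
  · intro x uu hxu huo
    set V : Set X := (fun y => x * y) ⁻¹' uu with hV
    have hVo : IsOpen V := huo.preimage (continuous_const.mul continuous_id)
    have hV1 : (1:X) ∈ V := by simpa [hV] using hxu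
    obtain ⟨T, hTo, hT1, hTsym, hTsq⟩ := exists_sym_sqrt' (hVo.mem_nhds hV1)
    obtain ⟨n, hn⟩ := hbase T hTo hT1
    have hPo : IsOpen ((fun y => x * y) '' (W n)⁻¹) :=
      (Homeomorph.mulLeft x).isOpenMap _ (hWo n).inv
    have hPne : ((fun y => x * y) '' (W n)⁻¹).Nonempty :=
      ⟨x * 1, ⟨1, by simpa using hW1 n, rfl⟩⟩
    obtain ⟨d, hdP, hdD⟩ := hDd.inter_open_nonempty _ hPo hPne
    rcases hdP with ⟨w', hw', rfl⟩
    have hw'W : w'⁻¹ ∈ W n := Set.mem_inv.1 hw'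
    refine ⟨(fun y => (x * w') * y) '' W n, ⟨⟨x * w', n⟩, ⟨hdD, Set.mem_univ _⟩, rfl⟩, ?_, ?_⟩
    · exact ⟨w'⁻¹, hw'W, by group⟩
    · rintro _ ⟨w, hw, rfl⟩
      have hw'T : w' ∈ T := by
        have h4 : w'⁻¹⁻¹ ∈ T⁻¹ := Set.inv_mem_inv.2 (hn hw'W)
        rw [hTsym] at h4
        simpa using h4
      have : w' * w ∈ V := hTsq (Set.mul_mem_mul hw'T (hn hw))
      simpa [hV, mul_assoc] using this

end GroupHelper
section Forward

variable {G : Type*} [Group G] [TopologicalSpace G] [IsTopologicalGroup G] [T2Space G]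

private theorem forward_direction (hNar : OmegaNarrow G) (hQ : QSpace G)
    (O : Set G) (hO : IsOpen O) (hO1 : (1:G) ∈ O) :
    ∃ H : Subgroup G, H.Normal ∧ IsCountablyCompactIn (H : Set G) ∧
      HasCountableCharacter (H : Set G) ∧ (H : Set G) ⊆ O ∧
      IsClosedMap (QuotientGroup.mk : G → G ⧸ H) ∧
      (∀ y : G ⧸ H, IsCountablyCompactIn ((QuotientGroup.mk : G → G ⧸ H) ⁻¹' {y})) ∧
      SeparableSpace (G ⧸ H) ∧ MetrizableSpace (G ⧸ H) := by
  classical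
  obtain ⟨U, hUprop, hUclu⟩ := hQ 1
  -- square root function
  set f : Set G → Set G := fun W =>
    if h : IsOpen W ∧ (1:G) ∈ W then (exists_sym_sqrt' (h.1.mem_nhds h.2)).choose else Set.univ
    with hfdef
  have hf : ∀ W : Set G, IsOpen W → (1:G) ∈ W →
      IsOpen (f W) ∧ (1:G) ∈ f W ∧ (f W)⁻¹ = f W ∧ f W * f W ⊆ W := by
    intro W h1 h2
    have h : IsOpen W ∧ (1:G) ∈ W := ⟨h1, h2⟩
    simp only [hfdef, dif_pos h]
    exact (exists_sym_sqrt' (h.1.mem_nhds h.2)).choose_spec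
  -- the chain of symmetric neighbourhoods
  set V : ℕ → Set G := fun n => Nat.rec (f (U 0 ∩ O)) (fun k Vk => f (Vk ∩ U (k+1))) n with hVdef
  have hV0 : V 0 = f (U 0 ∩ O) := rfl
  have hVs : ∀ n, V (n+1) = f (V n ∩ U (n+1)) := fun n => rfl
  have hVbase : ∀ n, IsOpen (V n) ∧ (1:G) ∈ V n := by
    intro n
    induction n with
    | zero =>
      rw [hV0]
      have h := hf (U 0 ∩ O) ((hUprop 0).1.inter hO) ⟨(hUprop 0).2, hO1⟩
      exact ⟨h.1, h.2.1⟩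
    | succ n ih =>
      rw [hVs]
      have h := hf (V n ∩ U (n+1)) (ih.1.inter (hUprop (n+1)).1) ⟨ih.2, (hUprop (n+1)).2⟩
      exact ⟨h.1, h.2.1⟩
  have hVopen : ∀ n, IsOpen (V n) := fun n => (hVbase n).1
  have hV1 : ∀ n, (1:G) ∈ V n := fun n => (hVbase n).2
  have hVsym : ∀ n, (V n)⁻¹ = V n := by
    intro n
    cases n with
    | zero =>
      rw [hV0]
      exact (hf (U 0 ∩ O) ((hUprop 0).1.inter hO) ⟨(hUprop 0).2, hO1⟩).2.2.1
    | succ n =>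
      rw [hVs]
      exact (hf (V n ∩ U (n+1)) ((hVopen n).inter (hUprop (n+1)).1)
        ⟨hV1 n, (hUprop (n+1)).2⟩).2.2.1
  have hVsq0 : V 0 * V 0 ⊆ U 0 ∩ O := by
    rw [hV0]
    exact (hf (U 0 ∩ O) ((hUprop 0).1.inter hO) ⟨(hUprop 0).2, hO1⟩).2.2.2
  have hVsq : ∀ n, V (n+1) * V (n+1) ⊆ V n ∩ U (n+1) := by
    intro n
    rw [hVs]
    exact (hf (V n ∩ U (n+1)) ((hVopen n).inter (hUprop (n+1)).1)
      ⟨hV1 n, (hUprop (n+1)).2⟩).2.2.2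
  have hVself : ∀ n, ∀ x, x ∈ V n → x ∈ V n * V n := fun n x hx =>
    ⟨x, hx, 1, hV1 n, mul_one x⟩
  have hVsub : ∀ n, V n ⊆ U n := by
    intro n
    cases n with
    | zero => exact fun x hx => (hVsq0 (hVself 0 x hx)).1
    | succ n => exact fun x hx => (hVsq n (hVself (n+1) x hx)).2
  have hVO : V 0 ⊆ O := fun x hx => (hVsq0 (hVself 0 x hx)).2
  have hVmono : ∀ n, V (n+1) ⊆ V n := fun n x hx => (hVsq n (hVself (n+1) x hx)).1
  have hVmono' : ∀ m n, m ≤ n → V n ⊆ V m := by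
    intro m n hmn
    induction hmn with
    | refl => exact fun x hx => hx
    | step h ih => exact fun x hx => ih (hVmono _ hx)
  have hVclos : ∀ n, closure (V (n+1)) ⊆ V n := by
    intro n
    have h := closure_subset_mul' (S := V (n+1)) (hVopen (n+1)) (hV1 (n+1))
    rw [hVsym (n+1)] at h
    exact h.trans (fun x hx => (hVsq n hx).1)
  -- the subgroup K
  set K : Set G := ⋂ n, V n with hKdef
  have hKV : ∀ n, K ⊆ V n := fun n => Set.iInter_subset _ n
  have hK1 : (1:G) ∈ K := Set.mem_iInter.2 hV1
  have hKmul : ∀ x y, x ∈ K → y ∈ K → x * y ∈ K := fun x y hx hy =>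
    Set.mem_iInter.2 fun n => (hVsq n (Set.mul_mem_mul (hKV (n+1) hx) (hKV (n+1) hy))).1
  have hKinv : ∀ x, x ∈ K → x⁻¹ ∈ K := by
    intro x hx
    refine Set.mem_iInter.2 fun n => ?_
    rw [← hVsym n]
    exact Set.inv_mem_inv.2 (hKV n hx)
  -- cluster points of chain-sequences land in K
  have hcluV : ∀ u : ℕ → G, (∀ n, u n ∈ V n) → ∃ z, MapClusterPt z Filter.atTop u ∧ z ∈ K := by
    intro u hu
    obtain ⟨z, hz⟩ := hUclu u (fun n => hVsub n (hu n))
    refine ⟨z, hz, Set.mem_iInter.2 fun m => ?_⟩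
    exact hVclos m (mem_closure_of_mapClusterPt' hz
      ⟨m+1, fun n hn => hVmono' (m+1) n hn (hu n)⟩)
  -- omega-narrow covers
  choose A hAc hAcov using fun n => hNar (V n) (hVopen n) (hV1 n)
  have hDc : (insert (1:G) (⋃ n, A n)).Countable := (Set.countable_iUnion hAc).insert 1
  obtain ⟨d0, hd0⟩ := hDc.exists_eq_range ⟨1, Set.mem_insert _ _⟩
  set d : ℕ → G := fun n => Nat.rec (1:G) (fun k _ => d0 k) n with hddef
  have hd_0 : d 0 = 1 := rfl
  have hdcov : ∀ a, a ∈ ⋃ n, A n → ∃ i, d i = a := by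
    intro a ha
    have h : a ∈ insert (1:G) (⋃ n, A n) := Set.mem_insert_of_mem _ ha
    rw [hd0] at h
    rcases h with ⟨k, rfl⟩
    exact ⟨k+1, rfl⟩
  -- conjugation maps
  set c : ℕ → G → G := fun i g => (d i)⁻¹ * g * d i with hcdef
  have hccont : ∀ i, Continuous (c i) := fun i =>
    (continuous_const.mul continuous_id).mul continuous_const
  have hc0 : ∀ g, c 0 g = g := by intro g; simp [hcdef, hd_0]
  have hcmul : ∀ i x y, c i (x * y) = c i x * c i y := by
    intro i x y; simp only [hcdef]; group
  have hcinv : ∀ i x, c i x⁻¹ = (c i x)⁻¹ := by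
    intro i x; simp only [hcdef]; group
  -- the normal subgroup
  set Hs : Set G := {g | ∀ i, c i g ∈ K} with hHsdef
  have hH1 : (1:G) ∈ Hs := by
    intro i
    have h : c i 1 = 1 := by simp [hcdef]
    rw [h]; exact hK1
  have hHmul : ∀ x y, x ∈ Hs → y ∈ Hs → x * y ∈ Hs := by
    intro x y hx hy i
    rw [hcmul]
    exact hKmul _ _ (hx i) (hy i)
  have hHinv : ∀ x, x ∈ Hs → x⁻¹ ∈ Hs := by
    intro x hx i
    rw [hcinv]
    exact hKinv _ (hx i)
  have hHsK : Hs ⊆ K := by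
    intro g hg
    have h := hg 0
    rwa [hc0] at h
  set H : Subgroup G :=
    { carrier := Hs
      one_mem' := hH1
      mul_mem' := fun {a b} ha hb => hHmul a b ha hb
      inv_mem' := fun {a} ha => hHinv a ha } with hHdef
  have hHcoe : (H : Set G) = Hs := rfl
  -- conjugates of Hs land in K
  have hconjK : ∀ g, g ∈ Hs → ∀ y : G, y * g * y⁻¹ ∈ K := by
    intro g hg y
    refine Set.mem_iInter.2 fun m => ?_
    have hcov : y⁻¹ ∈ A (m+2) * V (m+2) := by rw [hAcov]; trivial
    rcases Set.mem_mul.1 hcov with ⟨a, ha, v, hv, hav⟩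
    obtain ⟨i, hi⟩ := hdcov a (Set.mem_iUnion.2 ⟨m+2, ha⟩)
    have hk : a⁻¹ * g * a ∈ K := by rw [← hi]; exact hg i
    have hvinv : v⁻¹ ∈ V (m+2) := by
      rw [← hVsym (m+2)]; exact Set.inv_mem_inv.2 hv
    have h5 : v⁻¹ * (a⁻¹ * g * a) ∈ V (m+1) :=
      (hVsq (m+1) (Set.mul_mem_mul hvinv (hKV (m+2) hk))).1
    have h6 : v⁻¹ * (a⁻¹ * g * a) * v ∈ V m :=
      (hVsq m (Set.mul_mem_mul h5 (hVmono (m+1) hv))).1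
    have hy : y = v⁻¹ * a⁻¹ := by rw [← mul_inv_rev, hav, inv_inv]
    have hyy : y * g * y⁻¹ = v⁻¹ * (a⁻¹ * g * a) * v := by rw [hy]; group
    rw [hyy]; exact h6
  have hHnormal : H.Normal := by
    constructor
    intro g hg y
    intro i
    have h : c i (y * g * y⁻¹) = ((d i)⁻¹ * y) * g * ((d i)⁻¹ * y)⁻¹ := by
      simp only [hcdef]; group
    rw [h]
    exact hconjK g hg ((d i)⁻¹ * y)
  -- H is closed
  have hHclosed : IsClosed Hs := by
    have hKc : IsClosed K := by
      have h : K = ⋂ n, closure (V (n+1)) := by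
        apply Set.Subset.antisymm
        · exact Set.subset_iInter fun n => (hKV (n+1)).trans subset_closure
        · exact Set.subset_iInter fun n => (Set.iInter_subset _ n).trans (hVclos n)
      rw [h]
      exact isClosed_iInter fun n => isClosed_closure
    have h : Hs = ⋂ i, (c i) ⁻¹' K := by
      ext g; simp [hHsdef, Set.mem_iInter]
    rw [h]
    exact isClosed_iInter fun i => hKc.preimage (hccont i)
  -- the countable character family
  set B : ℕ → Set G := fun m =>
    ⋂ i ∈ Finset.range (m+1), ⋂ n ∈ Finset.range (m+1), (c i) ⁻¹' (V n) with hBdef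
  have hBmem : ∀ m g, g ∈ B m ↔ ∀ i, i ≤ m → ∀ n, n ≤ m → c i g ∈ V n := by
    intro m g
    simp [hBdef, Finset.mem_range, Nat.lt_succ_iff]
  have hBopen : ∀ m, IsOpen (B m) :=
    fun m => isOpen_biInter_finset fun i _ => isOpen_biInter_finset fun n _ =>
      (hVopen n).preimage (hccont i)
  have hHsB : ∀ m, Hs ⊆ B m := fun m g hg => (hBmem m g).2 fun i _ n _ => hKV n (hg i)
  have hB1 : ∀ m, (1:G) ∈ B m := fun m => hHsB m hH1
  have hBV : ∀ m, B m ⊆ V m := by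
    intro m g hg
    have h := (hBmem m g).1 hg 0 (Nat.zero_le m) m le_rfl
    rwa [hc0] at h
  have hBsym : ∀ m g, g ∈ B m → g⁻¹ ∈ B m := by
    intro m g hg
    refine (hBmem m g⁻¹).2 fun i hi n hn => ?_
    rw [hcinv, ← hVsym n]
    exact Set.inv_mem_inv.2 ((hBmem m g).1 hg i hi n hn)
  -- key cluster lemma into Hs
  have hcluH : ∀ u : ℕ → G, (∀ n, u n ∈ V n) →
      (∀ i k, ∃ M, ∀ n, M ≤ n → c i (u n) ∈ V k) →
      ∃ z, z ∈ Hs ∧ MapClusterPt z Filter.atTop u := by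
    intro u hu hcj
    obtain ⟨z, hz, _⟩ := hcluV u hu
    refine ⟨z, fun i => Set.mem_iInter.2 fun k => ?_, hz⟩
    have hcz : MapClusterPt (c i z) Filter.atTop ((c i) ∘ u) :=
      MapClusterPt.continuousAt_comp (hccont i).continuousAt hz
    rcases hcj i (k+1) with ⟨M, hM⟩
    exact hVclos k (mem_closure_of_mapClusterPt' hcz ⟨M, fun n hn => hM n hn⟩)
  -- countable character
  have hChar : ∀ W : Set G, IsOpen W → Hs ⊆ W → ∃ m, B m ⊆ W := by
    intro W hWo hWs
    by_contra hcon
    push_neg at hcon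
    have hpick : ∀ m, ∃ z, z ∈ B m ∧ z ∉ W := by
      intro m
      have h := hcon m
      rw [Set.not_subset] at h
      rcases h with ⟨z, hz1, hz2⟩
      exact ⟨z, hz1, hz2⟩
    choose zs hz1 hz2 using hpick
    have hcj : ∀ i k, ∃ M, ∀ n, M ≤ n → c i (zs n) ∈ V k := by
      intro i k
      exact ⟨max i k, fun n hn =>
        (hBmem n (zs n)).1 (hz1 n) i (le_trans (le_max_left i k) hn) k
          (le_trans (le_max_right i k) hn)⟩
    obtain ⟨z, hzH, hzc⟩ := hcluH zs (fun m => hBV m (hz1 m)) hcj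
    rcases mapClusterPt_frequently' hzc (hWo.mem_nhds (hWs hzH)) 0 with ⟨n, -, hn⟩
    exact hz2 n hn
  refine ⟨H, hHnormal, ?_, ?_, ?_, ?_, ?_, ?_, ?_⟩
  · -- countably compact
    apply isCountablyCompactIn_of_clusterPt
    intro u hu
    obtain ⟨z, hzH, hzc⟩ := hcluH u (fun n => hKV n (hHsK (hu n)))
      (fun i k => ⟨0, fun n _ => hKV k (hu n i)⟩)
    exact ⟨z, hzH, hzc⟩
  · -- countable character
    exact ⟨B, fun n => ⟨hBopen n, hHsB n⟩, fun W hWo hWs => hChar W hWo hWs⟩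
  · -- contained in O
    exact fun g hg => hVO (hKV 0 (hHsK hg))
  · -- closed map
    intro F hF
    rw [← (QuotientGroup.isQuotientMap_mk H).isClosed_preimage,
      QuotientGroup.preimage_image_mk_eq_mul]
    refine isClosed_of_closure_subset ?_
    intro g hg
    have happrox : ∀ m : ℕ, ∃ b, b ∈ B (m+2) ∧ ∃ p, p ∈ F * (H : Set G) ∧ g * b = p := by
      intro m
      have hgB : (fun y => g * y) '' B (m+2) ∈ 𝓝 g := by
        refine IsOpen.mem_nhds ((Homeomorph.mulLeft g).isOpenMap _ (hBopen (m+2))) ?_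
        exact ⟨1, hB1 _, mul_one g⟩
      rcases mem_closure_iff_nhds.1 hg _ hgB with ⟨p, ⟨b, hb, hbp⟩, hpF⟩
      exact ⟨b, hb, p, hpF, hbp⟩
    choose b hb p hp hbp using happrox
    have hdecomp : ∀ m, ∃ fm, fm ∈ F ∧ ∃ hm, hm ∈ Hs ∧ fm * hm = p m := by
      intro m
      rcases Set.mem_mul.1 (hp m) with ⟨fm, hfm, hm, hhm, hfh⟩
      exact ⟨fm, hfm, hm, hhm, hfh⟩
    choose fm hfm hmm hhm hfh using hdecomp
    set u : ℕ → G := fun m => b m * (hmm m)⁻¹ with hudef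
    have hu1 : ∀ m, u m ∈ V m := by
      intro m
      have h4 : b m * (hmm m)⁻¹ ∈ V (m+2) * V (m+2) :=
        Set.mul_mem_mul (hBV _ (hb m)) (hKV (m+2) (hKinv _ (hHsK (hhm m))))
      exact hVmono m (hVmono' (m+1) (m+1) le_rfl ((hVsq (m+1) h4).1))
    have hu2 : ∀ i k, ∃ M, ∀ m, M ≤ m → c i (u m) ∈ V k := by
      intro i k
      refine ⟨max i k, fun m hmk => ?_⟩
      have h5 : c i (b m) ∈ V (k+1) := by
        refine (hBmem (m+2) (b m)).1 (hb m) i ?_ (k+1) ?_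
        · exact le_trans (le_max_left i k) (by omega)
        · have := le_trans (le_max_right i k) hmk; omega
      have h6 : c i ((hmm m)⁻¹) ∈ V (k+1) := hKV (k+1) ((hHinv _ (hhm m)) i)
      have h7 := (hVsq k (Set.mul_mem_mul h5 h6)).1
      rw [← hcmul] at h7
      exact h7
    obtain ⟨z, hzH, hzc⟩ := hcluH u hu1 hu2
    have hfmu : ∀ m, fm m = g * u m := by
      intro m
      have h8 : fm m * hmm m = g * b m := by rw [hfh, hbp]
      have h9 : fm m = g * b m * (hmm m)⁻¹ := by
        rw [← h8]; group
      rw [h9, hudef]; group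
    have hgz : MapClusterPt (g * z) Filter.atTop fm := by
      have h10 : MapClusterPt (g * z) Filter.atTop ((fun y => g * y) ∘ u) :=
        MapClusterPt.continuousAt_comp (continuous_const.mul continuous_id).continuousAt hzc
      have h11 : (fun y => g * y) ∘ u = fm := by
        funext m; exact (hfmu m).symm
      rwa [h11] at h10
    have hgzF : g * z ∈ F := by
      have h12 : g * z ∈ closure F := mem_closure_of_mapClusterPt' hgz ⟨0, fun n _ => hfm n⟩
      rwa [hF.closure_eq] at h12
    exact ⟨g * z, hgzF, z⁻¹, hHinv z hzH, by group⟩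
  · -- fibers countably compact
    intro y
    obtain ⟨g, rfl⟩ := QuotientGroup.mk_surjective y
    apply isCountablyCompactIn_of_clusterPt
    intro u hu
    have hw : ∀ n, g⁻¹ * u n ∈ Hs := by
      intro n
      have h13 : (QuotientGroup.mk (u n) : G ⧸ H) = QuotientGroup.mk g := hu n
      have h14 : (u n)⁻¹ * g ∈ H := QuotientGroup.eq.1 h13
      have h15 := hHinv _ h14
      rwa [mul_inv_rev, inv_inv] at h15
    obtain ⟨z, hzH, hzc⟩ := hcluH (fun n => g⁻¹ * u n)
      (fun n => hKV n (hHsK (hw n))) (fun i k => ⟨0, fun n _ => hKV k (hw n i)⟩)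
    refine ⟨g * z, ?_, ?_⟩
    · simp only [Set.mem_preimage, Set.mem_singleton_iff]
      have h16 : (g * z)⁻¹ * g ∈ H := by
        have : (g * z)⁻¹ * g = z⁻¹ := by group
        rw [this]; exact hHinv z hzH
      exact QuotientGroup.eq.2 h16
    · have h17 : MapClusterPt (g * z) Filter.atTop ((fun y => g * y) ∘ (fun n => g⁻¹ * u n)) :=
        MapClusterPt.continuousAt_comp (continuous_const.mul continuous_id).continuousAt hzc
      have h18 : (fun y => g * y) ∘ (fun n => g⁻¹ * u n) = u := by
        funext n; simp
      rwa [h18] at h17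
  · -- separable
    choose A2 hA2c hA2cov using fun n => hNar (B n) (hBopen n) (hB1 n)
    refine ⟨⟨QuotientGroup.mk '' (⋃ n, A2 n), (Set.countable_iUnion hA2c).image _, ?_⟩⟩
    rw [dense_iff_inter_open]
    intro Wq hWq hWqne
    obtain ⟨yq, hyq⟩ := hWqne
    obtain ⟨g, rfl⟩ := QuotientGroup.mk_surjective yq
    have hpreo : IsOpen ((QuotientGroup.mk : G → G ⧸ H) ⁻¹' Wq) :=
      hWq.preimage QuotientGroup.continuous_mk
    have hpre : Hs ⊆ (fun x => g * x) ⁻¹' ((QuotientGroup.mk : G → G ⧸ H) ⁻¹' Wq) := by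
      intro h hh
      show (QuotientGroup.mk (g * h) : G ⧸ H) ∈ Wq
      have h19 : (QuotientGroup.mk (g * h) : G ⧸ H) = QuotientGroup.mk g := by
        refine QuotientGroup.eq.2 ?_
        have : (g * h)⁻¹ * g = h⁻¹ := by group
        rw [this]; exact hHinv h hh
      rw [h19]; exact hyq
    obtain ⟨n, hn⟩ := hChar _ (hpreo.preimage (continuous_const.mul continuous_id)) hpre
    have hgmem : g ∈ A2 n * B n := by rw [hA2cov n]; trivial
    rcases Set.mem_mul.1 hgmem with ⟨a, ha, bb, hbb, hab⟩
    have haPre : a ∈ (QuotientGroup.mk : G → G ⧸ H) ⁻¹' Wq := by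
      have h20 : a = g * bb⁻¹ := by rw [← hab]; group
      rw [h20]
      exact hn (hBsym n bb hbb)
    exact ⟨QuotientGroup.mk a, haPre, Set.mem_image_of_mem _ (Set.mem_iUnion.2 ⟨n, ha⟩)⟩
  · -- metrizable
    haveI : H.Normal := hHnormal
    haveI : IsClosed (H : Set G) := hHclosed
    choose A2 hA2c hA2cov using fun n => hNar (B n) (hBopen n) (hB1 n)
    have hDsc : (QuotientGroup.mk '' (⋃ n, A2 n) : Set (G ⧸ H)).Countable :=
      (Set.countable_iUnion hA2c).image _
    have hDsd : Dense (QuotientGroup.mk '' (⋃ n, A2 n) : Set (G ⧸ H)) := by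
      rw [dense_iff_inter_open]
      intro Wq hWq hWqne
      obtain ⟨yq, hyq⟩ := hWqne
      obtain ⟨g, rfl⟩ := QuotientGroup.mk_surjective yq
      have hpreo : IsOpen ((QuotientGroup.mk : G → G ⧸ H) ⁻¹' Wq) :=
        hWq.preimage QuotientGroup.continuous_mk
      have hpre : Hs ⊆ (fun x => g * x) ⁻¹' ((QuotientGroup.mk : G → G ⧸ H) ⁻¹' Wq) := by
        intro h hh
        show (QuotientGroup.mk (g * h) : G ⧸ H) ∈ Wq
        have h19 : (QuotientGroup.mk (g * h) : G ⧸ H) = QuotientGroup.mk g := by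
          refine QuotientGroup.eq.2 ?_
          have : (g * h)⁻¹ * g = h⁻¹ := by group
          rw [this]; exact hHinv h hh
        rw [h19]; exact hyq
      obtain ⟨n, hn⟩ := hChar _ (hpreo.preimage (continuous_const.mul continuous_id)) hpre
      have hgmem : g ∈ A2 n * B n := by rw [hA2cov n]; trivial
      rcases Set.mem_mul.1 hgmem with ⟨a, ha, bb, hbb, hab⟩
      have haPre : a ∈ (QuotientGroup.mk : G → G ⧸ H) ⁻¹' Wq := by
        have h20 : a = g * bb⁻¹ := by rw [← hab]; group
        rw [h20]
        exact hn (hBsym n bb hbb)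
      exact ⟨QuotientGroup.mk a, haPre, Set.mem_image_of_mem _ (Set.mem_iUnion.2 ⟨n, ha⟩)⟩
    haveI : SecondCountableTopology (G ⧸ H) := by
      refine secondCountable_of_dense_of_base hDsc hDsd
        (W := fun n => QuotientGroup.mk '' B n)
        (fun n => QuotientGroup.isOpenMap_coe _ (hBopen n))
        (fun n => ⟨1, hB1 n, by simp⟩) ?_
      intro N hNo hN1
      have hpreo : IsOpen ((QuotientGroup.mk : G → G ⧸ H) ⁻¹' N) :=
        hNo.preimage QuotientGroup.continuous_mk
      have hpre : Hs ⊆ (QuotientGroup.mk : G → G ⧸ H) ⁻¹' N := by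
        intro h hh
        show (QuotientGroup.mk h : G ⧸ H) ∈ N
        have h21 : (QuotientGroup.mk h : G ⧸ H) = 1 := (QuotientGroup.eq_one_iff h).2 hh
        rw [h21]; exact hN1
      obtain ⟨n, hn⟩ := hChar _ hpreo hpre
      refine ⟨n, ?_⟩
      rintro _ ⟨x, hx, rfl⟩
      exact hn hx
    infer_instance

end Forward
section Backward

variable {G : Type*} [Group G] [TopologicalSpace G] [IsTopologicalGroup G] [T2Space G]

private theorem backward_direction
    (hR : ∃ H : Subgroup G, H.Normal ∧ IsCountablyCompactIn (H : Set G) ∧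
      HasCountableCharacter (H : Set G) ∧ (H : Set G) ⊆ Set.univ ∧
      IsClosedMap (QuotientGroup.mk : G → G ⧸ H) ∧
      (∀ y : G ⧸ H, IsCountablyCompactIn ((QuotientGroup.mk : G → G ⧸ H) ⁻¹' {y})) ∧
      SeparableSpace (G ⧸ H) ∧ MetrizableSpace (G ⧸ H)) :
    OmegaNarrow G ∧ QSpace G := by
  obtain ⟨H, hNorm, hcc, hchar, -, hclosed, hfib, hsep, hmetr⟩ := hR
  constructor
  · -- omega narrow
    intro Vv hVo hV1
    obtain ⟨W, hWo, hW1, hWsym, hWsq⟩ := exists_sym_sqrt' (hVo.mem_nhds hV1)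
    obtain ⟨F, hFfin, hFW⟩ := totallyBounded_of_clusterPt' hWo hW1 hWsym
      (fun u hu => hcc.exists_clusterPt u hu)
    haveI := hsep
    obtain ⟨Ds, hDsc, hDsd⟩ := TopologicalSpace.exists_countable_dense (G ⧸ H)
    choose rep hrepspec using fun y : G ⧸ H => QuotientGroup.mk_surjective y
    have hAcount : ((rep '' Ds) * F).Countable := by
      rw [← Set.image2_mul]
      exact Set.Countable.image2 (hDsc.image rep) hFfin.countable _
    refine ⟨(rep '' Ds) * F, hAcount, ?_⟩
    rw [Set.eq_univ_iff_forall]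
    intro g
    have hgWo : IsOpen ((fun y => g * y) '' W) := (Homeomorph.mulLeft g).isOpenMap _ hWo
    have hopen : IsOpen (QuotientGroup.mk '' ((fun y => g * y) '' W) : Set (G ⧸ H)) :=
      QuotientGroup.isOpenMap_coe _ hgWo
    have hne : (QuotientGroup.mk '' ((fun y => g * y) '' W) : Set (G ⧸ H)).Nonempty :=
      ⟨QuotientGroup.mk (g * 1), ⟨g * 1, ⟨1, hW1, rfl⟩, rfl⟩⟩
    obtain ⟨yq, hyqU, hyqD⟩ := hDsd.inter_open_nonempty _ hopen hne
    rcases hyqU with ⟨-, ⟨w, hwW, rfl⟩, rfl⟩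
    have hamem : rep (QuotientGroup.mk (g * w)) ∈ rep '' Ds :=
      ⟨QuotientGroup.mk (g * w), hyqD, rfl⟩
    set a := rep (QuotientGroup.mk (g * w)) with hadef
    have heq : (QuotientGroup.mk a : G ⧸ H) = QuotientGroup.mk (g * w) := hrepspec _
    have hHmem : a⁻¹ * (g * w) ∈ (H : Set G) := QuotientGroup.eq.1 heq
    obtain ⟨f, hf, w1, hw1, hfw⟩ := Set.mem_mul.1 (hFW hHmem)
    have hwinv : w⁻¹ ∈ W := by
      rw [← hWsym]; exact Set.inv_mem_inv.2 hwW
    have hg : g = (a * f) * (w1 * w⁻¹) := by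
      have h2 : a * (f * w1) = g * w := by
        rw [hfw]; group
      calc g = (g * w) * w⁻¹ := by group
        _ = (a * (f * w1)) * w⁻¹ := by rw [h2]
        _ = (a * f) * (w1 * w⁻¹) := by group
    rw [hg]
    exact Set.mul_mem_mul (Set.mul_mem_mul hamem hf)
      (hWsq (Set.mul_mem_mul hw1 hwinv))
  · -- q-space
    intro x
    haveI := hmetr
    obtain ⟨s, hs⟩ := (𝓝 (QuotientGroup.mk x : G ⧸ H)).exists_antitone_basis
    refine ⟨fun n => (QuotientGroup.mk : G → G ⧸ H) ⁻¹' (interior (s n)),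
      fun n => ⟨isOpen_interior.preimage QuotientGroup.continuous_mk, ?_⟩, ?_⟩
    · exact mem_interior_iff_mem_nhds.2 (hs.1.mem_of_mem trivial)
    · intro u hu
      by_contra hno
      push_neg at hno
      have hno' : ∀ z : G, ¬ MapClusterPt z Filter.atTop u := fun z => hno z
      have htend : Filter.Tendsto (fun n => (QuotientGroup.mk (u n) : G ⧸ H))
          Filter.atTop (𝓝 (QuotientGroup.mk x)) := by
        rw [hs.1.tendsto_right_iff]
        intro i _
        refine Filter.eventually_atTop.2 ⟨i, fun n hn => ?_⟩
        exact hs.2 hn (interior_subset (hu n))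
      have hex : ∀ m, ∃ n, m ≤ n ∧ (QuotientGroup.mk (u n) : G ⧸ H) = QuotientGroup.mk x := by
        intro m
        have hTc : IsClosed (u '' Set.Ici m) := isClosed_image_Ici_of_no_clusterPt hno' m
        have hCc : IsClosed (QuotientGroup.mk '' (u '' Set.Ici m) : Set (G ⧸ H)) :=
          hclosed _ hTc
        have hxcl : (QuotientGroup.mk x : G ⧸ H) ∈
            closure (QuotientGroup.mk '' (u '' Set.Ici m)) := by
          rw [mem_closure_iff_nhds]
          intro N hN
          have hev : ∀ᶠ n in Filter.atTop, (QuotientGroup.mk (u n) : G ⧸ H) ∈ N :=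
            htend.eventually_mem hN
          obtain ⟨M, hM⟩ := Filter.eventually_atTop.1 hev
          exact ⟨QuotientGroup.mk (u (max m M)), hM _ (le_max_right m M),
            ⟨u (max m M), ⟨max m M, le_max_left m M, rfl⟩, rfl⟩⟩
        rw [hCc.closure_eq] at hxcl
        rcases hxcl with ⟨-, ⟨n, hn, rfl⟩, hmk⟩
        exact ⟨n, hn, hmk⟩
      choose ψ hψ1 hψ2 using hex
      set φ : ℕ → ℕ := fun k => Nat.rec (ψ 0) (fun _ nk => ψ (nk + 1)) k with hφdef
      have hφ0 : φ 0 = ψ 0 := rfl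
      have hφs : ∀ k, φ (k+1) = ψ (φ k + 1) := fun k => rfl
      have hφmono : ∀ k, φ k < φ (k+1) := by
        intro k; rw [hφs]; exact Nat.lt_of_succ_le (hψ1 (φ k + 1))
      have hφtend : Filter.Tendsto φ Filter.atTop Filter.atTop :=
        (strictMono_nat_of_lt_succ hφmono).tendsto_atTop
      have hfibmem : ∀ k, u (φ k) ∈ (QuotientGroup.mk : G → G ⧸ H) ⁻¹' {QuotientGroup.mk x} := by
        intro k
        have : (QuotientGroup.mk (u (φ k)) : G ⧸ H) = QuotientGroup.mk x := by
          cases k with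
          | zero => rw [hφ0]; exact hψ2 0
          | succ k => rw [hφs]; exact hψ2 _
        simpa [Set.mem_preimage] using this
      obtain ⟨z, _, hzc⟩ := (hfib (QuotientGroup.mk x)).exists_clusterPt
        (fun k => u (φ k)) hfibmem
      exact hno' z (MapClusterPt.of_comp hφtend hzc)

end Backward

theorem omegaNarrow_and_qSpace_iff (G : Type*) [Group G] [TopologicalSpace G] [IsTopologicalGroup G] [T2Space G] :
    (OmegaNarrow G ∧ QSpace G) ↔
      ∀ O : Set G, IsOpen O → (1 : G) ∈ O →
        ∃ H : Subgroup G, H.Normal ∧ IsCountablyCompactIn (H : Set G) ∧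
          HasCountableCharacter (H : Set G) ∧ (H : Set G) ⊆ O ∧
          IsClosedMap (QuotientGroup.mk : G → G ⧸ H) ∧
          (∀ y : G ⧸ H, IsCountablyCompactIn ((QuotientGroup.mk : G → G ⧸ H) ⁻¹' {y})) ∧
          SeparableSpace (G ⧸ H) ∧ MetrizableSpace (G ⧸ H) := by
  constructor
  · rintro ⟨hn, hq⟩ O hO hO1
    exact forward_direction hn hq O hO hO1
  · intro hR
    exact backward_direction ⟨(hR Set.univ isOpen_univ trivial).choose,
      (hR Set.univ isOpen_univ trivial).choose_spec⟩
end

section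
/- A Hausdorff topological group G is ω-balanced and a strict q-space if and only if for each open neighborhood O of the identity in G there is a closed sequentially compact invariant (normal) subgroup H which is of countable character in G, such that H ⊆ O, the canonical quotient mapping p : G → G/H is sequential-perfect, and the quotient space G/H is metrizable. -/
open Filter Topology Set Pointwise TopologicalSpace

universe u

set_option linter.unusedSectionVars false

section Back

variable {G : Type*} [Group G] [TopologicalSpace G] [IsTopologicalGroup G] [T2Space G]

private lemma aux_back_bal
    (h : ∀ O : Set G, IsOpen O → (1 : G) ∈ O →
      ∃ H : Subgroup G, H.Normal ∧ IsClosed (H : Set G) ∧ IsSeqCompact (H : Set G) ∧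
        HasCountableCharacter (H : Set G) ∧ (H : Set G) ⊆ O ∧
        IsClosedMap (QuotientGroup.mk : G → G ⧸ H) ∧
        (∀ y : G ⧸ H, IsSeqCompact ((QuotientGroup.mk : G → G ⧸ H) ⁻¹' {y})) ∧
        MetrizableSpace (G ⧸ H)) : OmegaBalanced G := by
  intro Uu hUu
  obtain ⟨H, hnorm, -, -, ⟨B, hB, hBbase⟩, hHO, -, -, -⟩ :=
    h (interior Uu) isOpen_interior (mem_interior_iff_mem_nhds.2 hUu)
  refine ⟨Set.range B, Set.countable_range B, ?_, ?_⟩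
  · rintro V ⟨n, rfl⟩
    exact ⟨(hB n).1, (hB n).2 H.one_mem⟩
  · intro x
    have hconj : Continuous (fun g : G => x * g * x⁻¹) := by fun_prop
    obtain ⟨n, hn⟩ := hBbase ((fun g : G => x * g * x⁻¹) ⁻¹' (interior Uu))
      (isOpen_interior.preimage hconj)
      (fun g hg => by
        have : x * g * x⁻¹ ∈ (H : Set G) := hnorm.conj_mem g hg x
        exact hHO this)
    exact ⟨B n, Set.mem_range_self n, fun v hv => interior_subset (hn hv)⟩

private lemma aux_back_strict
    (h : ∀ O : Set G, IsOpen O → (1 : G) ∈ O →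
      ∃ H : Subgroup G, H.Normal ∧ IsClosed (H : Set G) ∧ IsSeqCompact (H : Set G) ∧
        HasCountableCharacter (H : Set G) ∧ (H : Set G) ⊆ O ∧
        IsClosedMap (QuotientGroup.mk : G → G ⧸ H) ∧
        (∀ y : G ⧸ H, IsSeqCompact ((QuotientGroup.mk : G → G ⧸ H) ⁻¹' {y})) ∧
        MetrizableSpace (G ⧸ H)) : StrictQSpace G := by
  intro x
  obtain ⟨H, -, -, -, -, -, hclosedmap, hfib, hmetr⟩ := h Set.univ isOpen_univ (Set.mem_univ 1)
  letI : MetricSpace (G ⧸ H) := TopologicalSpace.metrizableSpaceMetric _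
  set p : G → G ⧸ H := QuotientGroup.mk with hp
  refine ⟨fun n => p ⁻¹' (Metric.ball (p x) (1 / (n + 1))), ⟨fun n => ?_, ?_⟩, ?_⟩
  · constructor
    · exact Metric.isOpen_ball.preimage QuotientGroup.continuous_mk
    · simp only [Set.mem_preimage, Metric.mem_ball, dist_self]
      positivity
  · -- every selection has a cluster point
    intro u hu
    by_contra hno
    push_neg at hno
    have hpu : Tendsto (fun n => p (u n)) atTop (𝓝 (p x)) := by
      rw [Metric.tendsto_atTop]
      intro ε hε
      obtain ⟨N, hN⟩ := exists_nat_one_div_lt hε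
      refine ⟨N, fun n hn => ?_⟩
      have h1 := hu n
      simp only [Set.mem_preimage, Metric.mem_ball] at h1
      refine lt_of_lt_of_le h1 (le_trans ?_ hN.le)
      have : (N : ℝ) + 1 ≤ (n : ℝ) + 1 := by exact_mod_cast Nat.succ_le_succ hn
      exact one_div_le_one_div_of_le (by positivity) this
    have hclosedtail : ∀ k, IsClosed (u '' Set.Ici k) := by
      intro k
      refine isClosed_of_closure_subset ?_
      intro z hz
      have hz' := hno z
      rw [mapClusterPt_iff_frequently] at hz'
      push_neg at hz'
      obtain ⟨s, hs, hev⟩ := hz'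
      obtain ⟨m, hm⟩ := Filter.eventually_atTop.1 hev
      have hkm : Set.Ici k = Set.Ico k (max k m) ∪ Set.Ici (max k m) :=
        (Set.Ico_union_Ici_eq_Ici (le_max_left k m)).symm
      rw [hkm, Set.image_union, closure_union] at hz
      rcases hz with hz | hz
      · have hfin : (u '' Set.Ico k (max k m)).Finite := (Set.finite_Ico _ _).image u
        rw [hfin.isClosed.closure_eq] at hz
        exact Set.image_mono (Set.Ico_subset_Ici_self) hz
      · exfalso
        rw [mem_closure_iff_nhds] at hz
        obtain ⟨y, hys, hyim⟩ := hz s hs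
        obtain ⟨n, hn, rfl⟩ := hyim
        exact hm n (le_trans (le_max_right k m) hn) hys
    have hfreq : ∃ᶠ n in atTop, p (u n) = p x := by
      rw [Filter.frequently_atTop]
      intro k
      have hcl : IsClosed (p '' (u '' Set.Ici k)) := hclosedmap _ (hclosedtail k)
      have hmem : p x ∈ p '' (u '' Set.Ici k) := by
        rw [← hcl.closure_eq]
        refine mem_closure_of_tendsto hpu ?_
        filter_upwards [Filter.eventually_ge_atTop k] with n hn
        exact ⟨u n, ⟨n, hn, rfl⟩, rfl⟩
      obtain ⟨y, ⟨n, hn, rfl⟩, hpy⟩ := hmem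
      exact ⟨n, hn, hpy⟩
    obtain ⟨φ, hφ, hφP⟩ := Filter.extraction_of_frequently_atTop hfreq
    have hsel : ∀ k, (u ∘ φ) k ∈ p ⁻¹' {p x} := fun k => by
      simp only [Set.mem_preimage, Function.comp_apply, Set.mem_singleton_iff]
      exact hφP k
    obtain ⟨a, -, ψ, hψ, hψt⟩ := hfib (p x) hsel
    refine hno a ?_
    refine MapClusterPt.of_comp (φ := φ ∘ ψ) ((hφ.comp hψ).tendsto_atTop) ?_
    have : (u ∘ (φ ∘ ψ)) = (u ∘ φ) ∘ ψ := rfl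
    rw [this]
    exact hψt.mapClusterPt
  · -- the intersection is the fiber
    have hinter : (⋂ n : ℕ, p ⁻¹' (Metric.ball (p x) (1 / (n + 1)))) = p ⁻¹' {p x} := by
      ext z
      simp only [Set.mem_iInter, Set.mem_preimage, Metric.mem_ball, Set.mem_singleton_iff]
      constructor
      · intro hz
        have hd : dist (p z) (p x) ≤ 0 := by
          by_contra hd
          push_neg at hd
          obtain ⟨N, hN⟩ := exists_nat_one_div_lt hd
          exact lt_irrefl _ ((hz N).trans hN)
        exact dist_le_zero.1 hd
      · intro hz n
        rw [hz, dist_self]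
        positivity
    rw [hinter]
    exact hfib (p x)

end Back

section Fwd

variable {G : Type*} [Group G] [TopologicalSpace G] [IsTopologicalGroup G] [T2Space G]

private lemma aux_symm_sq {V : Set G} (hV : IsOpen V) (h1 : (1 : G) ∈ V) :
    ∃ S : Set G, IsOpen S ∧ (1 : G) ∈ S ∧ S⁻¹ = S ∧ S * S ⊆ V ∧ closure S ⊆ V := by
  obtain ⟨W, hWo, hW1, hWW⟩ := exists_open_nhds_one_mul_subset (hV.mem_nhds h1)
  set S : Set G := W ∩ W⁻¹ with hS
  have hSo : IsOpen S := hWo.inter hWo.inv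
  have hS1 : (1 : G) ∈ S := ⟨hW1, by simpa using hW1⟩
  have hSsymm : S⁻¹ = S := by
    simp [hS, Set.inter_inv, Set.inter_comm]
  have hSS : S * S ⊆ V := by
    rintro z ⟨a, ha, b, hb, rfl⟩
    exact hWW (Set.mul_mem_mul ha.1 hb.1)
  refine ⟨S, hSo, hS1, hSsymm, hSS, ?_⟩
  -- closure S ⊆ V
  intro a ha
  have hopen : IsOpen {y : G | a⁻¹ * y ∈ S} := hSo.preimage (by fun_prop)
  have hmem : a ∈ {y : G | a⁻¹ * y ∈ S} := by simp [hS1]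
  obtain ⟨b, hb1, hb2⟩ := mem_closure_iff.1 ha _ hopen hmem
  -- b ∈ S and a⁻¹ * b ∈ S
  have : a = b * (a⁻¹ * b)⁻¹ := by group
  rw [this]
  refine hSS (Set.mul_mem_mul hb2 ?_)
  rw [← hSsymm]
  exact Set.inv_mem_inv.2 hb1

end Fwd

section Main

variable {G : Type*} [Group G] [TopologicalSpace G] [IsTopologicalGroup G] [T2Space G]

private lemma aux_forward (hbal : OmegaBalanced G) (U : ℕ → Set G)
    (hU : IsQSequenceAt (1 : G) U) (hUc : IsSeqCompact (⋂ n, U n))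
    (O : Set G) (hO : IsOpen O) (hO1 : (1 : G) ∈ O) :
    ∃ H : Subgroup G, H.Normal ∧ IsClosed (H : Set G) ∧ IsSeqCompact (H : Set G) ∧
      HasCountableCharacter (H : Set G) ∧ (H : Set G) ⊆ O ∧
      IsClosedMap (QuotientGroup.mk : G → G ⧸ H) ∧
      (∀ y : G ⧸ H, IsSeqCompact ((QuotientGroup.mk : G → G ⧸ H) ⁻¹' {y})) ∧
      MetrizableSpace (G ⧸ H) := by
  classical
  -- choice of symmetric square roots
  have hsq : ∀ V : Set G, ∃ S : Set G, IsOpen S ∧ (1 : G) ∈ S ∧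
      (IsOpen V → (1 : G) ∈ V → S⁻¹ = S ∧ S * S ⊆ V ∧ closure S ⊆ V) := by
    intro V
    by_cases h : IsOpen V ∧ (1 : G) ∈ V
    · obtain ⟨S, h1, h2, h3, h4, h5⟩ := aux_symm_sq h.1 h.2
      exact ⟨S, h1, h2, fun _ _ => ⟨h3, h4, h5⟩⟩
    · exact ⟨Set.univ, isOpen_univ, Set.mem_univ _, fun ho h1 => absurd ⟨ho, h1⟩ h⟩
  have hen : ∀ V : Set G, ∃ e : ℕ → Set G, (∀ k, IsOpen (e k) ∧ (1 : G) ∈ e k) ∧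
      (IsOpen V → (1 : G) ∈ V → ∀ x : G, ∃ k, ∀ v ∈ e k, x * v * x⁻¹ ∈ V) := by
    intro V
    by_cases h : IsOpen V ∧ (1 : G) ∈ V
    · obtain ⟨γ, hγc, hγ1, hγx⟩ := hbal V (h.1.mem_nhds h.2)
      have hne : γ.Nonempty := by
        obtain ⟨V', hV', -⟩ := hγx 1
        exact ⟨V', hV'⟩
      obtain ⟨e, he⟩ := Set.Countable.exists_eq_range hγc hne
      refine ⟨e, fun k => hγ1 _ (he ▸ Set.mem_range_self k), fun _ _ x => ?_⟩
      obtain ⟨V', hV'γ, hV'⟩ := hγx x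
      rw [he] at hV'γ
      obtain ⟨k, rfl⟩ := hV'γ
      exact ⟨k, hV'⟩
    · exact ⟨fun _ => Set.univ, fun _ => ⟨isOpen_univ, Set.mem_univ _⟩,
        fun ho h1 => absurd ⟨ho, h1⟩ h⟩
  choose S So S1 Sspec using hsq
  choose e eb espec using hen
  -- the countable family
  let step : ℕ → Set G → Set G := fun k V => match k with
    | 0 => S V
    | (k' + 1) => e V k'
  let W : ℕ → List ℕ → Set G := fun n l => l.foldr step (U n ∩ O)
  have W_nil : ∀ n, W n [] = U n ∩ O := fun _ => rfl
  have W_cons : ∀ n k l, W n (k :: l) = step k (W n l) := fun _ _ _ => rfl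
  have Wb : ∀ n l, IsOpen (W n l) ∧ (1 : G) ∈ W n l := by
    intro n l
    induction l with
    | nil => exact ⟨((hU.1 n).1).inter hO, (hU.1 n).2, hO1⟩
    | cons k l ih =>
      match k with
      | 0 => exact ⟨So _, S1 _⟩
      | (k' + 1) => exact eb _ k'
  have WS : ∀ n l, (S (W n l))⁻¹ = S (W n l) ∧ S (W n l) * S (W n l) ⊆ W n l ∧
      closure (S (W n l)) ⊆ W n l := fun n l => Sspec _ (Wb n l).1 (Wb n l).2
  have WE : ∀ n l (x : G), ∃ k, ∀ v ∈ e (W n l) k, x * v * x⁻¹ ∈ W n l :=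
    fun n l => espec _ (Wb n l).1 (Wb n l).2
  -- the candidate subgroup carrier
  set M : Set G := ⋂ q : ℕ × List ℕ, W q.1 q.2 with hM
  have hMmem : ∀ g : G, g ∈ M ↔ ∀ n l, g ∈ W n l := by
    intro g
    rw [hM, Set.mem_iInter]
    exact ⟨fun h n l => h (n, l), fun h q => h q.1 q.2⟩
  have hMsubS : ∀ g ∈ M, ∀ n l, g ∈ S (W n l) := by
    intro g hg n l
    have := (hMmem g).1 hg n (0 :: l)
    rwa [W_cons] at this
  have hMone : (1 : G) ∈ M := (hMmem 1).2 fun n l => (Wb n l).2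
  have hMmul : ∀ a ∈ M, ∀ b ∈ M, a * b ∈ M := by
    intro a ha b hb
    refine (hMmem _).2 fun n l => ?_
    exact (WS n l).2.1 (Set.mul_mem_mul (hMsubS a ha n l) (hMsubS b hb n l))
  have hMinv : ∀ a ∈ M, a⁻¹ ∈ M := by
    intro a ha
    refine (hMmem _).2 fun n l => ?_
    have h1 : a⁻¹ ∈ (S (W n l))⁻¹ := Set.inv_mem_inv.2 (hMsubS a ha n l)
    rw [(WS n l).1] at h1
    have : a⁻¹ = a⁻¹ * 1 := by group
    rw [this]
    exact (WS n l).2.1 (Set.mul_mem_mul h1 (S1 _))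
  have hMconj : ∀ a ∈ M, ∀ x : G, x * a * x⁻¹ ∈ M := by
    intro a ha x
    refine (hMmem _).2 fun n l => ?_
    obtain ⟨k, hk⟩ := WE n l x
    have haek : a ∈ e (W n l) k := by
      have := (hMmem a).1 ha n ((k + 1) :: l)
      rwa [W_cons] at this
    exact hk a haek
  have hMclosed : IsClosed M := by
    have : M = ⋂ q : ℕ × List ℕ, closure (S (W q.1 q.2)) := by
      apply Set.Subset.antisymm
      · intro g hg
        exact Set.mem_iInter.2 fun q => subset_closure (hMsubS g hg q.1 q.2)
      · intro g hg
        exact (hMmem g).2 fun n l => (WS n l).2.2 (Set.mem_iInter.1 hg (n, l))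
    rw [this]
    exact isClosed_iInter fun q => isClosed_closure
  have hMsubU : ∀ n, M ⊆ U n := by
    intro n g hg
    have := (hMmem g).1 hg n []
    rw [W_nil] at this
    exact this.1
  have hMsubO : M ⊆ O := by
    intro g hg
    have := (hMmem g).1 hg 0 []
    rw [W_nil] at this
    exact this.2
  -- enumeration of the index set
  let d : ℕ → ℕ × List ℕ := Denumerable.ofNat (ℕ × List ℕ)
  have hd : ∀ q : ℕ × List ℕ, ∃ j, d j = q := fun q => ⟨Encodable.encode q, Denumerable.ofNat_encode q⟩
  -- the decreasing base of neighbourhoods of M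
  set F : ℕ → Set G := fun m =>
    (⋂ j ∈ Finset.range (m + 1), (W (d j).1 (d j).2 ∩ U j)) ∩ O with hF
  have hFopen : ∀ m, IsOpen (F m) := by
    intro m
    refine IsOpen.inter (isOpen_biInter_finset fun j _ => ?_) hO
    exact ((Wb _ _).1).inter (hU.1 j).1
  have hFsupM : ∀ m, M ⊆ F m := by
    intro m g hg
    refine ⟨Set.mem_biInter fun j _ => ⟨(hMmem g).1 hg _ _, hMsubU j hg⟩, hMsubO hg⟩
  have hFsubU : ∀ m, F m ⊆ U m := by
    intro m g hg
    exact (Set.mem_iInter₂.1 hg.1 m (Finset.self_mem_range_succ m)).2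
  have hFanti : ∀ {m m' : ℕ}, m ≤ m' → F m' ⊆ F m := by
    intro m m' hmm g hg
    refine ⟨Set.mem_iInter₂.2 fun j hj => ?_, hg.2⟩
    exact Set.mem_iInter₂.1 hg.1 j (Finset.mem_range.2 ((Finset.mem_range.1 hj).trans_le
      (Nat.succ_le_succ hmm)))
  have hFone : ∀ m, (1 : G) ∈ F m := fun m => hFsupM m hMone
  have hFsubW : ∀ j m, j ≤ m → F m ⊆ W (d j).1 (d j).2 := by
    intro j m hjm g hg
    exact (Set.mem_iInter₂.1 hg.1 j (Finset.mem_range.2 (Nat.lt_succ_of_le hjm))).1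
  -- cluster points of selections from F lie in M
  have hKey : ∀ g : ℕ → G, (∀ m, g m ∈ F m) → ∀ q : G, MapClusterPt q Filter.atTop g → q ∈ M := by
    intro g hg q hq
    refine (hMmem q).2 fun n l => ?_
    obtain ⟨j, hj⟩ := hd (n, (0 : ℕ) :: l)
    have hSW : W (d j).1 (d j).2 = S (W n l) := by
      rw [hj]
      rfl
    refine (WS n l).2.2 ?_
    rw [mem_closure_iff]
    intro o ho hqo
    have hfreq := (mapClusterPt_iff_frequently.1 hq) o (ho.mem_nhds hqo)
    obtain ⟨m, hmo, hmj⟩ := (hfreq.and_eventually (Filter.eventually_ge_atTop j)).exists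
    refine ⟨g m, hmo, ?_⟩
    have := hFsubW j m hmj (hg m)
    rwa [hSW] at this
  -- countable character
  have hchar : ∀ W' : Set G, IsOpen W' → M ⊆ W' → ∃ m, F m ⊆ W' := by
    intro W' hW'o hMW'
    by_contra hcon
    push_neg at hcon
    choose x hx hx' using fun m => Set.not_subset.1 (hcon m)
    obtain ⟨q, hq⟩ := hU.2 x fun m => hFsubU m (hx m)
    have hqM : q ∈ M := hKey x hx q hq
    obtain ⟨m, hm⟩ := ((mapClusterPt_iff_frequently.1 hq) W' (hW'o.mem_nhds (hMW' hqM))).exists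
    exact hx' m hm
  -- sequential compactness of M
  have hMseq : IsSeqCompact M := by
    intro u hu
    obtain ⟨a, haU, φ, hφ, hφt⟩ := hUc (x := u) fun n => Set.mem_iInter.2 fun k => hMsubU k (hu n)
    have haM : a ∈ M := by
      rw [← hMclosed.closure_eq]
      exact mem_closure_of_tendsto hφt (Filter.Eventually.of_forall fun n => hu (φ n))
    exact ⟨a, haM, φ, hφ, hφt⟩
  -- package as a subgroup
  let H : Subgroup G :=
    { carrier := M
      one_mem' := hMone
      mul_mem' := fun ha hb => hMmul _ ha _ hb
      inv_mem' := fun ha => hMinv _ ha }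
  have hnormal : H.Normal := ⟨fun a ha x => hMconj a ha x⟩
  have hHco : (H : Set G) = M := rfl
  -- fibers are sequentially compact
  have hfib : ∀ y : G ⧸ H, IsSeqCompact ((QuotientGroup.mk : G → G ⧸ H) ⁻¹' {y}) := by
    intro y
    obtain ⟨g, rfl⟩ := QuotientGroup.mk_surjective y
    intro u hu
    have hv : ∀ n, g⁻¹ * u n ∈ M := by
      intro n
      have h1 : (QuotientGroup.mk (u n) : G ⧸ H) = QuotientGroup.mk g := hu n
      have h2 : (u n)⁻¹ * g ∈ H := QuotientGroup.eq.1 h1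
      have h3 : g⁻¹ * u n = ((u n)⁻¹ * g)⁻¹ := by group
      rw [h3]
      exact hMinv _ h2
    obtain ⟨a, haM, φ, hφ, hφt⟩ := hMseq (x := fun n => g⁻¹ * u n) hv
    refine ⟨g * a, ?_, φ, hφ, ?_⟩
    · simp only [Set.mem_preimage, Set.mem_singleton_iff]
      rw [Eq.comm, QuotientGroup.eq]
      simpa using (show a ∈ H from haM)
    · have heq : (u ∘ φ) = fun k => g * (g⁻¹ * u (φ k)) := by
        funext k
        simp only [Function.comp_apply]
        group
      rw [heq]
      exact ((continuous_mul_left g).tendsto a).comp hφt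
  -- the quotient map is closed
  have hclosedmap : IsClosedMap (QuotientGroup.mk : G → G ⧸ H) := by
    intro C hC
    rw [← (QuotientGroup.isQuotientMap_mk H).isClosed_preimage,
      QuotientGroup.preimage_image_mk_eq_mul, ← isOpen_compl_iff, isOpen_iff_forall_mem_open]
    intro x hx
    have hdisj : ∃ m, ∀ f ∈ F m, ∀ h ∈ M, x * (f * h) ∉ C := by
      by_contra hcon
      push_neg at hcon
      choose f hf h hh hc using hcon
      obtain ⟨h₀, hh₀, φ, hφ, hφt⟩ := hMseq (x := h) hh
      have hgF : ∀ k, f (φ k) ∈ F k := fun k => hFanti (hφ.le_apply) (hf (φ k))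
      obtain ⟨q, hq⟩ := hU.2 (fun k => f (φ k)) fun k => hFsubU k (hgF k)
      have hqM : q ∈ M := hKey _ hgF q hq
      have hmemC : x * (q * h₀) ∈ C := by
        rw [← hC.closure_eq, mem_closure_iff]
        intro o ho hxo
        have hcont : ContinuousAt (fun p : G × G => x * (p.1 * p.2)) (q, h₀) := by fun_prop
        have hnhds : (fun p : G × G => x * (p.1 * p.2)) ⁻¹' o ∈ 𝓝 (q, h₀) :=
          hcont (ho.mem_nhds hxo)
        rw [mem_nhds_prod_iff] at hnhds
        obtain ⟨A, hA, B, hB, hAB⟩ := hnhds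
        have hev : ∀ᶠ k in Filter.atTop, h (φ k) ∈ B := hφt hB
        have hfr := (mapClusterPt_iff_frequently.1 hq) A hA
        obtain ⟨k, hkA, hkB⟩ := (hfr.and_eventually hev).exists
        exact ⟨x * (f (φ k) * h (φ k)), hAB (Set.mk_mem_prod hkA hkB), hc (φ k)⟩
      exact hx ⟨x * (q * h₀), hmemC, (q * h₀)⁻¹, hMinv _ (hMmul _ hqM _ hh₀), by group⟩
    obtain ⟨m, hm⟩ := hdisj
    refine ⟨(fun y => x⁻¹ * y) ⁻¹' F m, ?_, (hFopen m).preimage (by fun_prop), by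
      simp only [Set.mem_preimage, inv_mul_cancel]
      exact hFone m⟩
    rintro y hy ⟨c, hcC, h', hh', rfl⟩
    have heq : c = x * ((x⁻¹ * (c * h')) * h'⁻¹) := by group
    exact hm _ hy _ (hMinv _ hh') (heq ▸ hcC)
  -- metrizability of the quotient
  have hmetr : MetrizableSpace (G ⧸ H) := by
    haveI := hnormal
    haveI : IsClosed ((H : Set G)) := hMclosed
    haveI : T3Space (G ⧸ H) := QuotientGroup.instT3Space H
    have hbasis : (𝓝 (1 : G ⧸ H)).HasBasis (fun _ : ℕ => True)
        (fun m => (QuotientGroup.mk : G → G ⧸ H) '' F m) := by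
      constructor
      intro t
      constructor
      · intro ht
        obtain ⟨Ω, hΩt, hΩo, hΩ1⟩ := mem_nhds_iff.1 ht
        have hpre : M ⊆ (QuotientGroup.mk : G → G ⧸ H) ⁻¹' Ω := by
          intro g hg
          have hg1 : (QuotientGroup.mk g : G ⧸ H) = 1 := (QuotientGroup.eq_one_iff g).2 hg
          rw [Set.mem_preimage, hg1]
          exact hΩ1
        obtain ⟨m, hm⟩ := hchar _ (hΩo.preimage QuotientGroup.continuous_mk) hpre
        exact ⟨m, trivial, (Set.image_subset_iff.2 hm).trans hΩt⟩
      · rintro ⟨m, -, hm⟩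
        refine Filter.mem_of_superset ?_ hm
        refine (QuotientGroup.isOpenMap_coe (F m) (hFopen m)).mem_nhds ?_
        exact ⟨1, hFone m, rfl⟩
    haveI : (𝓝 (1 : G ⧸ H)).IsCountablyGenerated := hbasis.isCountablyGenerated
    letI u : UniformSpace (G ⧸ H) := IsTopologicalGroup.rightUniformSpace (G ⧸ H)
    haveI : (uniformity (G ⧸ H)).IsCountablyGenerated := by
      rw [uniformity_eq_comap_nhds_one']
      exact Filter.comap.isCountablyGenerated _ _
    exact UniformSpace.metrizableSpace
  exact ⟨H, hnormal, hMclosed, hMseq, ⟨F, fun m => ⟨hFopen m, hFsupM m⟩, hchar⟩, hMsubO,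
    hclosedmap, hfib, hmetr⟩

end Main

theorem omegaBalanced_and_strictQSpace_iff (G : Type*) [Group G] [TopologicalSpace G] [IsTopologicalGroup G] [T2Space G] :
    (OmegaBalanced G ∧ StrictQSpace G) ↔
      ∀ O : Set G, IsOpen O → (1 : G) ∈ O →
        ∃ H : Subgroup G, H.Normal ∧ IsClosed (H : Set G) ∧ IsSeqCompact (H : Set G) ∧
          HasCountableCharacter (H : Set G) ∧ (H : Set G) ⊆ O ∧
          IsClosedMap (QuotientGroup.mk : G → G ⧸ H) ∧
          (∀ y : G ⧸ H, IsSeqCompact ((QuotientGroup.mk : G → G ⧸ H) ⁻¹' {y})) ∧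
          MetrizableSpace (G ⧸ H) := by
  constructor
  · rintro ⟨hbal, hsq⟩ O hO hO1
    obtain ⟨U, hU, hUc⟩ := hsq 1
    exact aux_forward hbal U hU hUc O hO hO1
  · intro h
    exact ⟨aux_back_bal h, aux_back_strict h⟩
end

section
/- A Hausdorff topological group G is ω-balanced and a strong q-space if and only if for each open neighborhood O of the identity in G there is a closed sequentially compact invariant (normal) subgroup H, having a countable base {V_n : n ∈ ω} of open neighborhoods of H in G such that H ⊆ O and {V_n : n ∈ ω} is a strong q-sequence at each point y ∈ H, such that the canonical quotient mapping p : G → G/H is strongly sequential-perfect and the quotient space G/H is metrizable. -/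
open Filter Topology Set Pointwise TopologicalSpace

universe u

section ChainAux

variable {G : Type*} [Group G] [TopologicalSpace G] [IsTopologicalGroup G]

/-- From ω-balancedness, construct a decreasing chain of open symmetric neighbourhoods of `1`
subordinated to a given sequence of neighbourhoods, whose members refine conjugates. -/
lemma exists_chain_aux (bal : OmegaBalanced G) (U : ℕ → Set G)
    (hU : ∀ n, IsOpen (U n) ∧ (1 : G) ∈ U n) (O : Set G) (hO : IsOpen O) (h1O : (1 : G) ∈ O) :
    ∃ W : ℕ → Set G,
      (∀ n, IsOpen (W n) ∧ (1 : G) ∈ W n) ∧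
      (∀ n, ∀ v ∈ W n, v⁻¹ ∈ W n) ∧
      (∀ n, ∀ a ∈ W (n + 1), ∀ b ∈ W (n + 1), a * b ∈ W n) ∧
      (∀ n, W n ⊆ U n) ∧ W 0 ⊆ O ∧
      (∀ x : G, ∀ n, ∃ m, ∀ v ∈ W m, x * v * x⁻¹ ∈ W n) := by
  classical
  -- a "shrinking" operation
  have shrink : ∀ S : Set G, ∃ T : Set G, S ∈ nhds (1 : G) →
      (IsOpen T ∧ (1 : G) ∈ T) ∧ (∀ v ∈ T, v⁻¹ ∈ T) ∧ ∀ a ∈ T, ∀ b ∈ T, a * b ∈ S := by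
    intro S
    by_cases hS : S ∈ nhds (1 : G)
    · obtain ⟨V, Vo, V1, hV⟩ := exists_open_nhds_one_mul_subset hS
      refine ⟨V ∩ V⁻¹, fun _ => ⟨⟨Vo.inter Vo.inv, ⟨V1, by simpa using V1⟩⟩, ?_, ?_⟩⟩
      · rintro v ⟨hv1, hv2⟩
        exact ⟨by simpa using hv2, by simpa using hv1⟩
      · rintro a ⟨ha, -⟩ b ⟨hb, -⟩
        exact hV (Set.mul_mem_mul ha hb)
    · exact ⟨∅, fun h => absurd h hS⟩
  -- an enumeration of the ω-balance families
  have gamma : ∀ S : Set G, ∃ g : ℕ → Set G, S ∈ nhds (1 : G) →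
      (∀ k, IsOpen (g k) ∧ (1 : G) ∈ g k) ∧ ∀ x : G, ∃ k, ∀ v ∈ g k, x * v * x⁻¹ ∈ S := by
    intro S
    by_cases hS : S ∈ nhds (1 : G)
    · obtain ⟨γ, hcount, hmem, hx⟩ := bal S hS
      have hne : γ.Nonempty := by
        obtain ⟨V, hV, -⟩ := hx 1
        exact ⟨V, hV⟩
      obtain ⟨g, hg⟩ := hcount.exists_eq_range hne
      refine ⟨g, fun _ => ⟨fun k => hmem _ (hg ▸ Set.mem_range_self k), fun x => ?_⟩⟩
      obtain ⟨V, hVγ, h⟩ := hx x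
      rw [hg] at hVγ
      obtain ⟨k, rfl⟩ := hVγ
      exact ⟨k, h⟩
    · exact ⟨fun _ => ∅, fun h => absurd h hS⟩
  choose sh hsh using shrink
  choose gm hgm using gamma
  -- the recursive construction
  let g : ℕ → ℕ → Set G := fun n =>
    Nat.rec (motive := fun _ => ℕ → Set G) (fun _ => sh (U 0 ∩ O))
      (fun m ih => Function.update ih (m + 1)
        (sh (ih m ∩ U (m + 1) ∩ gm (ih (Nat.unpair m).1) (Nat.unpair m).2))) n
  let W : ℕ → Set G := fun n => g n n
  have hgsucc : ∀ m, g (m + 1) = Function.update (g m) (m + 1)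
      (sh (g m m ∩ U (m + 1) ∩ gm (g m (Nat.unpair m).1) (Nat.unpair m).2)) := fun m => rfl
  have hcoh : ∀ n k, k ≤ n → g n k = W k := by
    intro n
    induction n with
    | zero => intro k hk; interval_cases k; rfl
    | succ n ih =>
      intro k hk
      rcases Nat.lt_or_ge k (n + 1) with h | h
      · rw [hgsucc n, Function.update_of_ne (by omega)]
        exact ih k (by omega)
      · have : k = n + 1 := le_antisymm hk h
        subst this; rfl
  have hW0 : W 0 = sh (U 0 ∩ O) := rfl
  have hWs : ∀ n, W (n + 1) =
      sh (W n ∩ U (n + 1) ∩ gm (W (Nat.unpair n).1) (Nat.unpair n).2) := by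
    intro n
    show g (n + 1) (n + 1) = _
    rw [hgsucc n, Function.update_self, hcoh n n le_rfl,
      hcoh n (Nat.unpair n).1 (Nat.unpair_left_le n)]
  -- basic neighbourhood properties
  have key : ∀ n, IsOpen (W n) ∧ (1 : G) ∈ W n := by
    intro n
    induction n using Nat.strong_induction_on with
    | _ n ih =>
      match n with
      | 0 =>
        have h : U 0 ∩ O ∈ nhds (1 : G) :=
          Filter.inter_mem ((hU 0).1.mem_nhds (hU 0).2) (hO.mem_nhds h1O)
        rw [hW0]; exact (hsh _ h).1
      | Nat.succ m =>
        have hWm := ih m (Nat.lt_succ_self m)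
        have hga := ih (Nat.unpair m).1 (Nat.lt_succ_of_le (Nat.unpair_left_le m))
        have hgm' := hgm (W (Nat.unpair m).1) (hga.1.mem_nhds hga.2)
        have h : W m ∩ U (m + 1) ∩ gm (W (Nat.unpair m).1) (Nat.unpair m).2 ∈ nhds (1 : G) :=
          Filter.inter_mem
            (Filter.inter_mem (hWm.1.mem_nhds hWm.2) ((hU (m + 1)).1.mem_nhds (hU (m + 1)).2))
            ((hgm'.1 _).1.mem_nhds (hgm'.1 _).2)
        rw [hWs m]; exact (hsh _ h).1
  have hmem : ∀ n, W n ∈ nhds (1 : G) := fun n => (key n).1.mem_nhds (key n).2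
  have hsub : ∀ S, S ∈ nhds (1 : G) → sh S ⊆ S := by
    intro S h a ha
    have := (hsh S h).2.2 a ha 1 (hsh S h).1.2
    simpa using this
  have hTmem : ∀ n, W n ∩ U (n + 1) ∩ gm (W (Nat.unpair n).1) (Nat.unpair n).2 ∈ nhds (1 : G) := by
    intro n
    have hgm' := hgm (W (Nat.unpair n).1) (hmem _)
    exact Filter.inter_mem (Filter.inter_mem (hmem n) ((hU (n + 1)).1.mem_nhds (hU (n + 1)).2))
      ((hgm'.1 _).1.mem_nhds (hgm'.1 _).2)
  refine ⟨W, key, ?_, ?_, ?_, ?_, ?_⟩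
  · -- symmetry
    intro n
    match n with
    | 0 =>
      rw [hW0]
      exact fun v hv => (hsh _ (Filter.inter_mem ((hU 0).1.mem_nhds (hU 0).2)
        (hO.mem_nhds h1O))).2.1 v hv
    | Nat.succ m =>
      rw [hWs m]
      exact fun v hv => (hsh _ (hTmem m)).2.1 v hv
  · -- products
    intro n a ha b hb
    rw [hWs n] at ha hb
    have := (hsh _ (hTmem n)).2.2 a ha b hb
    exact this.1.1
  · -- W n ⊆ U n
    intro n
    match n with
    | 0 =>
      rw [hW0]
      exact (hsub _ (Filter.inter_mem ((hU 0).1.mem_nhds (hU 0).2)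
        (hO.mem_nhds h1O))).trans Set.inter_subset_left
    | Nat.succ m =>
      rw [hWs m]
      exact (hsub _ (hTmem m)).trans (Set.inter_subset_left.trans Set.inter_subset_right)
  · -- W 0 ⊆ O
    rw [hW0]
    exact (hsub _ (Filter.inter_mem ((hU 0).1.mem_nhds (hU 0).2)
      (hO.mem_nhds h1O))).trans Set.inter_subset_right
  · -- conjugates
    intro x n
    obtain ⟨k, hk⟩ := (hgm (W n) (hmem n)).2 x
    refine ⟨Nat.pair n k + 1, fun v hv => ?_⟩
    rw [hWs (Nat.pair n k)] at hv
    have hv' : v ∈ gm (W (Nat.unpair (Nat.pair n k)).1) (Nat.unpair (Nat.pair n k)).2 :=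
      (hsub _ (hTmem (Nat.pair n k)) hv).2
    rw [Nat.unpair_pair] at hv'
    exact hk v hv'

end ChainAux

theorem omegaBalanced_and_strongQSpace_iff (G : Type*) [Group G] [TopologicalSpace G] [IsTopologicalGroup G] [T2Space G] :
    (OmegaBalanced G ∧ StrongQSpace G) ↔
      ∀ O : Set G, IsOpen O → (1 : G) ∈ O →
        ∃ (H : Subgroup G) (V : ℕ → Set G), H.Normal ∧ IsClosed (H : Set G) ∧
          IsSeqCompact (H : Set G) ∧
          (∀ n, IsOpen (V n) ∧ (H : Set G) ⊆ V n) ∧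
          (∀ W : Set G, IsOpen W → (H : Set G) ⊆ W → ∃ n, V n ⊆ W) ∧
          (H : Set G) ⊆ O ∧
          (∀ y ∈ (H : Set G), IsStrongQSequenceAt y V) ∧
          IsClosedMap (QuotientGroup.mk : G → G ⧸ H) ∧
          (∀ F : Set (G ⧸ H), IsSeqCompact F →
            IsSeqCompact ((QuotientGroup.mk : G → G ⧸ H) ⁻¹' F)) ∧
          MetrizableSpace (G ⧸ H) := by
  constructor
  · rintro ⟨bal, sq⟩ O hO h1O
    obtain ⟨U, hU⟩ := sq 1
    obtain ⟨W, hWo, hWsymm, hWsq, hWU, hW0O, hconj⟩ := exists_chain_aux bal U hU.1 O hO h1O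
    have hdec1 : ∀ n, W (n + 1) ⊆ W n := fun n a ha => by
      simpa using hWsq n a ha 1 (hWo (n + 1)).2
    have hdec : ∀ m n, m ≤ n → W n ⊆ W m := by
      intro m n hmn
      induction n with
      | zero => have : m = 0 := by omega
                subst this; exact subset_rfl
      | succ n ih =>
        rcases Nat.lt_or_ge m (n + 1) with h | h
        · exact (hdec1 n).trans (ih (by omega))
        · have : m = n + 1 := by omega
          subst this; exact subset_rfl
    set H : Subgroup G :=
      { carrier := ⋂ n, W n
        one_mem' := Set.mem_iInter.2 fun n => (hWo n).2
        mul_mem' := fun {a b} ha hb => Set.mem_iInter.2 fun n =>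
          hWsq n a (Set.mem_iInter.1 ha (n + 1)) b (Set.mem_iInter.1 hb (n + 1))
        inv_mem' := fun {a} ha => Set.mem_iInter.2 fun n =>
          hWsymm n a (Set.mem_iInter.1 ha n) } with hHdef
    have hHcar : (H : Set G) = ⋂ n, W n := rfl
    have hHW : ∀ n, (H : Set G) ⊆ W n := fun n a ha => Set.mem_iInter.1 ha n
    have hmemH : ∀ a : G, (∀ n, a ∈ W n) → a ∈ (H : Set G) := fun a ha => Set.mem_iInter.2 ha
    -- the key convergence lemma
    have L1 : ∀ z : ℕ → G, (∀ n, z n ∈ W n) →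
        ∃ q ∈ (H : Set G), ∃ φ : ℕ → ℕ, StrictMono φ ∧
          Filter.Tendsto (z ∘ φ) Filter.atTop (nhds q) := by
      intro z hz
      obtain ⟨q, φ, hφ, hlim⟩ := hU.2 z fun n => hWU n (hz n)
      refine ⟨q, hmemH q ?_, φ, hφ, hlim⟩
      intro m
      have hSopen : IsOpen ((fun y => q⁻¹ * y) ⁻¹' W (m + 2)) :=
        (hWo (m + 2)).1.preimage (continuous_const.mul continuous_id)
      have hqS : q ∈ (fun y => q⁻¹ * y) ⁻¹' W (m + 2) := by
        simp [(hWo (m + 2)).2]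
      have ev1 := hlim.eventually_mem (hSopen.mem_nhds hqS)
      have ev2 : ∀ᶠ j in Filter.atTop, z (φ j) ∈ W (m + 2) := by
        filter_upwards [Filter.eventually_ge_atTop (m + 2)] with j hj
        exact hdec (m + 2) (φ j) (hj.trans hφ.le_apply) (hz (φ j))
      obtain ⟨j, h1, h2⟩ := (ev1.and ev2).exists
      have h1' : q⁻¹ * z (φ j) ∈ W (m + 2) := h1
      have : z (φ j) * (q⁻¹ * z (φ j))⁻¹ ∈ W (m + 1) :=
        hWsq (m + 1) _ h2 _ (hWsymm (m + 2) _ h1')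
      have heq : z (φ j) * (q⁻¹ * z (φ j))⁻¹ = q := by group
      rw [heq] at this
      exact hdec m (m + 1) (by omega) this
    -- countable character
    have L2 : ∀ S : Set G, IsOpen S → (H : Set G) ⊆ S → ∃ n, W n ⊆ S := by
      intro S hSo hHS
      by_contra hcon
      push_neg at hcon
      choose z hz1 hz2 using fun n => Set.not_subset.1 (hcon n)
      obtain ⟨q, hqH, φ, hφ, hlim⟩ := L1 z hz1
      have := (hlim.eventually_mem (hSo.mem_nhds (hHS hqH))).exists
      obtain ⟨j, hj⟩ := this
      exact hz2 (φ j) hj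
    -- H is closed
    have hclosed : IsClosed (H : Set G) := by
      refine isClosed_of_closure_subset fun q hq => hmemH q fun m => ?_
      have hSopen : IsOpen ((fun y => q⁻¹ * y) ⁻¹' W (m + 1)) :=
        (hWo (m + 1)).1.preimage (continuous_const.mul continuous_id)
      have hqS : q ∈ (fun y => q⁻¹ * y) ⁻¹' W (m + 1) := by
        simp [(hWo (m + 1)).2]
      obtain ⟨h, hh1, hh2⟩ := mem_closure_iff.1 hq _ hSopen hqS
      have : h * (q⁻¹ * h)⁻¹ ∈ W m :=
        hWsq m _ (hHW (m + 1) hh2) _ (hWsymm (m + 1) _ hh1)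
      have heq : h * (q⁻¹ * h)⁻¹ = q := by group
      rwa [heq] at this
    have hnormal : H.Normal := by
      constructor
      intro h hh g
      refine hmemH _ fun n => ?_
      obtain ⟨m, hm⟩ := hconj g n
      exact hm h (hHW m hh)
    haveI : H.Normal := hnormal
    have hseq : IsSeqCompact (H : Set G) := by
      intro z hz
      obtain ⟨q, hq, φ, hφ, hlim⟩ := L1 z fun n => hHW n (hz n)
      exact ⟨q, hq, φ, hφ, hlim⟩
    have hqseq : ∀ y ∈ (H : Set G), IsStrongQSequenceAt y W := by
      intro y hy
      refine ⟨fun n => ⟨(hWo n).1, hHW n hy⟩, fun u hu => ?_⟩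
      obtain ⟨q, -, φ, hφ, hlim⟩ := L1 u hu
      exact ⟨q, φ, hφ, hlim⟩
    -- the quotient map is closed
    have hclosedmap : IsClosedMap (QuotientGroup.mk : G → G ⧸ H) := by
      intro F hF
      rw [← isOpen_compl_iff]
      rw [isOpen_iff_forall_mem_open]
      rintro x hx
      obtain ⟨g, rfl⟩ := QuotientGroup.mk_surjective x
      have hx' : (QuotientGroup.mk g : G ⧸ H) ∉ QuotientGroup.mk '' F := hx
      have claim : ∃ n, ∀ a ∈ W (n + 1), ∀ b ∈ W (n + 1), g * (a * b) ∉ F := by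
        by_contra hcon
        push_neg at hcon
        choose a ha b hb hfF using hcon
        have hc : ∀ n, a n * b n ∈ W n := fun n => hWsq n _ (ha n) _ (hb n)
        obtain ⟨q, hqH, φ, hφ, hlim⟩ := L1 (fun n => a n * b n) hc
        have hlim' : Filter.Tendsto (fun j => g * (a (φ j) * b (φ j)))
            Filter.atTop (nhds (g * q)) := hlim.const_mul g
        have hgqF : g * q ∈ F :=
          hF.mem_of_tendsto hlim' (Filter.Eventually.of_forall fun j => hfF (φ j))
        apply hx'
        refine ⟨g * q, hgqF, ?_⟩
        have : (QuotientGroup.mk (g * q) : G ⧸ H) = QuotientGroup.mk g := by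
          rw [QuotientGroup.mk_mul, (QuotientGroup.eq_one_iff q).2 hqH, mul_one]
        exact this
      obtain ⟨n, hn⟩ := claim
      refine ⟨QuotientGroup.mk '' ((fun y => g⁻¹ * y) ⁻¹' W (n + 1)), ?_, ?_, ?_⟩
      · rintro t ⟨s, hs, rfl⟩
        rintro ⟨f, hfF, hfe⟩
        have hsf : s⁻¹ * f ∈ H := (QuotientGroup.eq.1 hfe.symm)
        have : f = g * ((g⁻¹ * s) * (s⁻¹ * f)) := by group
        exact hn _ hs _ (hHW (n + 1) hsf) (this ▸ hfF)
      · exact QuotientGroup.isOpenMap_coe _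
          ((hWo (n + 1)).1.preimage (continuous_const.mul continuous_id))
      · exact ⟨g, by simp [(hWo (n + 1)).2], rfl⟩
    -- preimages of sequentially compact sets
    have hperf : ∀ F : Set (G ⧸ H), IsSeqCompact F →
        IsSeqCompact ((QuotientGroup.mk : G → G ⧸ H) ⁻¹' F) := by
      intro F hFsc x hx
      obtain ⟨ybar, hyF, φ, hφ, hlim⟩ := hFsc hx
      obtain ⟨y, rfl⟩ := QuotientGroup.mk_surjective ybar
      have hev : ∀ n, ∀ᶠ k in Filter.atTop, y⁻¹ * x (φ k) ∈ W n := by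
        intro n
        have hopen : IsOpen (QuotientGroup.mk '' ((fun z => y⁻¹ * z) ⁻¹' W (n + 1)) :
            Set (G ⧸ H)) := QuotientGroup.isOpenMap_coe _
          ((hWo (n + 1)).1.preimage (continuous_const.mul continuous_id))
        have hymem : (QuotientGroup.mk y : G ⧸ H) ∈
            QuotientGroup.mk '' ((fun z => y⁻¹ * z) ⁻¹' W (n + 1)) :=
          ⟨y, by simp [(hWo (n + 1)).2], rfl⟩
        filter_upwards [hlim.eventually_mem (hopen.mem_nhds hymem)] with k hk
        obtain ⟨s, hs, heq⟩ := hk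
        have hsx : s⁻¹ * x (φ k) ∈ H := QuotientGroup.eq.1 heq
        have : (y⁻¹ * s) * (s⁻¹ * x (φ k)) ∈ W n :=
          hWsq n _ hs _ (hHW (n + 1) hsx)
        have heq2 : (y⁻¹ * s) * (s⁻¹ * x (φ k)) = y⁻¹ * x (φ k) := by group
        rwa [heq2] at this
      obtain ⟨ψ, hψ, hψmem⟩ := Filter.extraction_forall_of_eventually hev
      obtain ⟨q, hqH, χ, hχ, hq⟩ := L1 (fun n => y⁻¹ * x (φ (ψ n))) hψmem
      refine ⟨y * q, ?_, φ ∘ ψ ∘ χ, hφ.comp (hψ.comp hχ), ?_⟩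
      · show (QuotientGroup.mk (y * q) : G ⧸ H) ∈ F
        rw [QuotientGroup.mk_mul, (QuotientGroup.eq_one_iff q).2 hqH, mul_one]
        exact hyF
      · have := hq.const_mul y
        simpa [Function.comp_def, mul_inv_cancel_left] using this
    -- first countability and metrizability of the quotient
    haveI : IsClosed ((H : Subgroup G) : Set G) := hclosed
    have hb : (nhds (1 : G ⧸ H)).IsCountablyGenerated := by
      have hbasis : (nhds (1 : G ⧸ H)).HasBasis (fun _ : ℕ => True)
          (fun n => (QuotientGroup.mk '' W n : Set (G ⧸ H))) := by
        constructor
        intro t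
        constructor
        · intro ht
          obtain ⟨T, hTsub, hTopen, hT1⟩ := mem_nhds_iff.mp ht
          have hHT : (H : Set G) ⊆ QuotientGroup.mk ⁻¹' T := by
            intro h hh
            have : (QuotientGroup.mk h : G ⧸ H) = 1 := (QuotientGroup.eq_one_iff h).2 hh
            rw [Set.mem_preimage, this]
            exact hT1
          obtain ⟨n, hn⟩ := L2 _ (hTopen.preimage continuous_quot_mk) hHT
          refine ⟨n, trivial, ?_⟩
          calc (QuotientGroup.mk '' W n : Set (G ⧸ H))
              ⊆ QuotientGroup.mk '' (QuotientGroup.mk ⁻¹' T) := Set.image_mono hn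
            _ ⊆ T := Set.image_preimage_subset _ _
            _ ⊆ t := hTsub
        · rintro ⟨n, -, hn⟩
          refine Filter.mem_of_superset ?_ hn
          have hopen : IsOpen (QuotientGroup.mk '' W n : Set (G ⧸ H)) :=
            QuotientGroup.isOpenMap_coe _ (hWo n).1
          exact hopen.mem_nhds ⟨1, (hWo n).2, rfl⟩
      exact hbasis.isCountablyGenerated
    haveI : FirstCountableTopology (G ⧸ H) := by
      constructor
      intro x
      obtain ⟨g, rfl⟩ := QuotientGroup.mk_surjective x
      rw [← map_mul_left_nhds_one (QuotientGroup.mk g : G ⧸ H)]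
      exact @Filter.map.isCountablyGenerated _ _ _ hb _
    letI : UniformSpace (G ⧸ H) := IsTopologicalGroup.rightUniformSpace (G ⧸ H)
    haveI : (uniformity (G ⧸ H)).IsCountablyGenerated := by
      rw [uniformity_eq_comap_nhds_one']
      exact Filter.comap.isCountablyGenerated _ _
    have hmetr : MetrizableSpace (G ⧸ H) := UniformSpace.metrizableSpace
    exact ⟨H, W, hnormal, hclosed, hseq, fun n => ⟨(hWo n).1, hHW n⟩, L2,
      (hHW 0).trans hW0O, hqseq, hclosedmap, hperf, hmetr⟩
  · intro h
    constructor
    · -- ω-balanced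
      intro Unb hUnb
      obtain ⟨O, hOsub, hOopen, hO1⟩ := mem_nhds_iff.mp hUnb
      obtain ⟨H, V, hnorm, -, -, hVopen, hchar, hHO, -, -, -, -⟩ := h O hOopen hO1
      refine ⟨Set.range V, Set.countable_range V, ?_, ?_⟩
      · rintro W ⟨n, rfl⟩
        exact ⟨(hVopen n).1, (hVopen n).2 H.one_mem⟩
      · intro x
        have hTopen : IsOpen ((fun v => x * v * x⁻¹) ⁻¹' O) :=
          hOopen.preimage ((continuous_const.mul continuous_id).mul continuous_const)
        have hHT : (H : Set G) ⊆ (fun v => x * v * x⁻¹) ⁻¹' O := by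
          intro hh hmem
          have : x * hh * x⁻¹ ∈ H := hnorm.conj_mem hh hmem x
          exact hHO this
        obtain ⟨n, hn⟩ := hchar _ hTopen hHT
        exact ⟨V n, Set.mem_range_self n, fun v hv => hOsub (hn hv)⟩
    · -- strong q-space
      intro x
      obtain ⟨H, V, -, -, -, hVopen, -, -, hq, -, -, -⟩ := h Set.univ isOpen_univ (Set.mem_univ 1)
      have hq1 := hq 1 H.one_mem
      refine ⟨fun n => (fun g => x⁻¹ * g) ⁻¹' V n, ⟨fun n =>
        ⟨(hq1.1 n).1.preimage (continuous_const.mul continuous_id), ?_⟩, ?_⟩⟩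
      · simpa using (hq1.1 n).2
      · intro u hu
        obtain ⟨p, φ, hφ, hlim⟩ := hq1.2 (fun n => x⁻¹ * u n) hu
        refine ⟨x * p, φ, hφ, ?_⟩
        have := hlim.const_mul x
        simpa [Function.comp_def, mul_inv_cancel_left] using this
end

section
/- A Hausdorff topological group G is ω-narrow and a strong q-space if and only if for each open neighborhood O of the identity in G there is a closed sequentially compact invariant (normal) subgroup H, having a countable base {V_n : n ∈ ω} of open neighborhoods of H in G such that H ⊆ O and {V_n : n ∈ ω} is a strong q-sequence at each point y ∈ H, such that the canonical quotient mapping p : G → G/H is strongly sequential-perfect and the quotient space G/H is separable and metrizable. -/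
open Filter Topology Set Pointwise TopologicalSpace

universe u

section Helpers

variable {G : Type*} [Group G] [TopologicalSpace G] [IsTopologicalGroup G]

/-- Every open neighbourhood of `1` contains a symmetric open neighbourhood whose square is
inside it. -/
theorem exists_sym_sq {U : Set G} (hU : IsOpen U) (h1 : (1 : G) ∈ U) :
    ∃ V : Set G, IsOpen V ∧ (1 : G) ∈ V ∧ V⁻¹ = V ∧ V * V ⊆ U := by
  rcases exists_open_nhds_one_mul_subset (hU.mem_nhds h1) with ⟨V, hVo, hV1, hVU⟩
  refine ⟨V ∩ V⁻¹, hVo.inter hVo.inv, ⟨hV1, by simp [hV1]⟩, by ext x; simp [and_comm], ?_⟩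
  rintro x ⟨a, ha, b, hb, rfl⟩
  exact hVU (mul_mem_mul ha.1 hb.1)

theorem OmegaNarrow.balanced (h : OmegaNarrow G) {U : Set G} (hU : IsOpen U)
    (h1 : (1 : G) ∈ U) :
    ∃ E : ℕ → Set G, (∀ k, IsOpen (E k) ∧ (1 : G) ∈ E k) ∧
      ∀ x : G, ∃ k, ∀ v ∈ E k, x * v * x⁻¹ ∈ U := by
  obtain ⟨V1, hV1o, hV11, hV1s, hV1U⟩ := exists_sym_sq hU h1
  obtain ⟨V, hVo, hVmem, hVs, hVV1⟩ := exists_sym_sq hV1o hV11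
  have hVsub : V ⊆ V1 := fun v hv => by simpa using hVV1 (mul_mem_mul hv hVmem)
  have hVVV : ∀ a ∈ V, ∀ b ∈ V, ∀ c ∈ V, a * b * c ∈ U := by
    intro a ha b hb c hc
    exact hV1U (mul_mem_mul (hVV1 (mul_mem_mul ha hb)) (hVsub hc))
  obtain ⟨A, hAc, hAV⟩ := h V hVo hVmem
  have hAne : A.Nonempty := by
    rcases (hAV ▸ Set.mem_univ (1 : G) : (1:G) ∈ A * V) with ⟨a, ha, -⟩
    exact ⟨a, ha⟩
  obtain ⟨f, rfl⟩ := hAc.exists_eq_range hAne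
  refine ⟨fun k => (fun g => (f k)⁻¹ * g * f k) ⁻¹' V, fun k => ⟨?_, by simpa using hVmem⟩, ?_⟩
  · exact hVo.preimage (by continuity)
  · intro x
    have : x⁻¹ ∈ Set.range f * V := hAV ▸ Set.mem_univ _
    rcases this with ⟨a, ⟨k, rfl⟩, s, hs, hx⟩
    refine ⟨k, fun v hv => ?_⟩
    simp only at hx
    have hxeq : x = s⁻¹ * (f k)⁻¹ := by
      rw [← mul_inv_rev, hx, inv_inv]
    have hs' : s⁻¹ ∈ V := hVs ▸ Set.inv_mem_inv.mpr hs
    have : x * v * x⁻¹ = s⁻¹ * ((f k)⁻¹ * v * f k) * s := by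
      rw [hxeq]; group
    rw [this]
    exact hVVV _ hs' _ hv _ hs

end Helpers

section BuildW

variable {G : Type*} [Group G]

/-- Recursive construction of a decreasing sequence of neighbourhoods used to build the
invariant subgroup. -/
def buildW (R : Set G → Set G) (E : Set G → ℕ → Set G) (T : ℕ → Set G) : ℕ → Set G
  | 0 => R (T 0)
  | (s + 1) => R (buildW R E T s ∩ T (s + 1) ∩
      E (buildW R E T (Nat.unpair s).1) (Nat.unpair s).2)
  termination_by n => n
  decreasing_by
  · exact Nat.lt_succ_self s
  · exact Nat.lt_succ_of_le (Nat.unpair_left_le s)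

theorem buildW_zero (R : Set G → Set G) (E : Set G → ℕ → Set G) (T : ℕ → Set G) :
    buildW R E T 0 = R (T 0) := by rw [buildW]

theorem buildW_succ (R : Set G → Set G) (E : Set G → ℕ → Set G) (T : ℕ → Set G) (s : ℕ) :
    buildW R E T (s + 1) = R (buildW R E T s ∩ T (s + 1) ∩
      E (buildW R E T (Nat.unpair s).1) (Nat.unpair s).2) := by rw [buildW]

end BuildW

section Spec

variable {G : Type*} [Group G] [TopologicalSpace G]

theorem buildW_basic (R : Set G → Set G) (E : Set G → ℕ → Set G) (T : ℕ → Set G)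
    (hR : ∀ S : Set G, IsOpen S → (1 : G) ∈ S →
      IsOpen (R S) ∧ (1 : G) ∈ R S ∧ (R S)⁻¹ = R S ∧ R S * R S ⊆ S)
    (hEo : ∀ S : Set G, IsOpen S → (1 : G) ∈ S → ∀ k, IsOpen (E S k) ∧ (1 : G) ∈ E S k)
    (hT : ∀ n, IsOpen (T n) ∧ (1 : G) ∈ T n) :
    ∀ s, IsOpen (buildW R E T s) ∧ (1 : G) ∈ buildW R E T s ∧
      (buildW R E T s)⁻¹ = buildW R E T s := by
  intro s
  induction s using Nat.strong_induction_on with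
  | _ s ih =>
    match s with
    | 0 =>
      rw [buildW_zero]
      exact ⟨(hR _ (hT 0).1 (hT 0).2).1, (hR _ (hT 0).1 (hT 0).2).2.1,
        (hR _ (hT 0).1 (hT 0).2).2.2.1⟩
    | (s + 1) =>
      have h1 := ih s (Nat.lt_succ_self s)
      have h2 := ih (Nat.unpair s).1 (Nat.lt_succ_of_le (Nat.unpair_left_le s))
      have hEk := hEo _ h2.1 h2.2.1 (Nat.unpair s).2
      have hAo : IsOpen (buildW R E T s ∩ T (s + 1) ∩
          E (buildW R E T (Nat.unpair s).1) (Nat.unpair s).2) :=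
        (h1.1.inter (hT (s + 1)).1).inter hEk.1
      have hA1 : (1 : G) ∈ buildW R E T s ∩ T (s + 1) ∩
          E (buildW R E T (Nat.unpair s).1) (Nat.unpair s).2 :=
        ⟨⟨h1.2.1, (hT (s + 1)).2⟩, hEk.2⟩
      rw [buildW_succ]
      exact ⟨(hR _ hAo hA1).1, (hR _ hAo hA1).2.1, (hR _ hAo hA1).2.2.1⟩

theorem buildW_sq (R : Set G → Set G) (E : Set G → ℕ → Set G) (T : ℕ → Set G)
    (hR : ∀ S : Set G, IsOpen S → (1 : G) ∈ S →
      IsOpen (R S) ∧ (1 : G) ∈ R S ∧ (R S)⁻¹ = R S ∧ R S * R S ⊆ S)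
    (hEo : ∀ S : Set G, IsOpen S → (1 : G) ∈ S → ∀ k, IsOpen (E S k) ∧ (1 : G) ∈ E S k)
    (hT : ∀ n, IsOpen (T n) ∧ (1 : G) ∈ T n) :
    (buildW R E T 0 * buildW R E T 0 ⊆ T 0) ∧ ∀ s,
      buildW R E T (s + 1) * buildW R E T (s + 1) ⊆ buildW R E T s ∩ T (s + 1) ∩
        E (buildW R E T (Nat.unpair s).1) (Nat.unpair s).2 := by
  have hB := buildW_basic R E T hR hEo hT
  constructor
  · rw [buildW_zero]
    exact (hR _ (hT 0).1 (hT 0).2).2.2.2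
  · intro s
    have h1 := hB s
    have h2 := hB (Nat.unpair s).1
    have hEk := hEo _ h2.1 h2.2.1 (Nat.unpair s).2
    have hAo : IsOpen (buildW R E T s ∩ T (s + 1) ∩
        E (buildW R E T (Nat.unpair s).1) (Nat.unpair s).2) :=
      (h1.1.inter (hT (s + 1)).1).inter hEk.1
    have hA1 : (1 : G) ∈ buildW R E T s ∩ T (s + 1) ∩
        E (buildW R E T (Nat.unpair s).1) (Nat.unpair s).2 :=
      ⟨⟨h1.2.1, (hT (s + 1)).2⟩, hEk.2⟩
    rw [buildW_succ]
    exact (hR _ hAo hA1).2.2.2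

end Spec

open Uniformity in
theorem metrizable_of_topGroup {K : Type*} [Group K] [TopologicalSpace K] [IsTopologicalGroup K]
    [T0Space K] [(nhds (1 : K)).IsCountablyGenerated] : MetrizableSpace K := by
  letI : UniformSpace K := IsTopologicalGroup.rightUniformSpace (G := K)
  haveI : (𝓤 K).IsCountablyGenerated := Filter.comap.isCountablyGenerated _ _
  exact UniformSpace.metrizableSpace

theorem forward_part {G : Type*} [Group G] [TopologicalSpace G] [IsTopologicalGroup G] [T2Space G]
    (hnar : OmegaNarrow G) (hqsp : StrongQSpace G) {O : Set G} (hO : IsOpen O)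
    (hO1 : (1 : G) ∈ O) :
    ∃ (H : Subgroup G) (V : ℕ → Set G), H.Normal ∧ IsClosed (H : Set G) ∧
      IsSeqCompact (H : Set G) ∧
      (∀ n, IsOpen (V n) ∧ (H : Set G) ⊆ V n) ∧
      (∀ W : Set G, IsOpen W → (H : Set G) ⊆ W → ∃ n, V n ⊆ W) ∧
      (H : Set G) ⊆ O ∧
      (∀ y ∈ (H : Set G), IsStrongQSequenceAt y V) ∧
      IsClosedMap (QuotientGroup.mk : G → G ⧸ H) ∧
      (∀ F : Set (G ⧸ H), IsSeqCompact F →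
        IsSeqCompact ((QuotientGroup.mk : G → G ⧸ H) ⁻¹' F)) ∧
      SeparableSpace (G ⧸ H) ∧ MetrizableSpace (G ⧸ H) := by
  classical
  obtain ⟨U', hU'q⟩ := hqsp 1
  obtain ⟨hU'o, hU's⟩ := hU'q
  -- the target sequence
  set T : ℕ → Set G := fun n => Nat.casesOn n (O ∩ U' 0) (fun m => U' (m + 1)) with hTdef
  have hT : ∀ n, IsOpen (T n) ∧ (1 : G) ∈ T n := by
    intro n
    cases n with
    | zero => exact ⟨hO.inter (hU'o 0).1, hO1, (hU'o 0).2⟩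
    | succ m => exact hU'o (m + 1)
  have hTU : ∀ n, T n ⊆ U' n := by
    intro n
    cases n with
    | zero => exact Set.inter_subset_right
    | succ m => exact subset_rfl
  -- shrinking function
  have hRex : ∀ S : Set G, ∃ S' : Set G, IsOpen S → (1 : G) ∈ S →
      IsOpen S' ∧ (1 : G) ∈ S' ∧ S'⁻¹ = S' ∧ S' * S' ⊆ S := by
    intro S
    by_cases h : IsOpen S ∧ (1 : G) ∈ S
    · obtain ⟨V, hV⟩ := exists_sym_sq h.1 h.2
      exact ⟨V, fun _ _ => hV⟩
    · exact ⟨∅, fun h1 h2 => absurd ⟨h1, h2⟩ h⟩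
  choose R hR using hRex
  -- balanced families
  have hEex : ∀ S : Set G, ∃ Ef : ℕ → Set G, IsOpen S → (1 : G) ∈ S →
      (∀ k, IsOpen (Ef k) ∧ (1 : G) ∈ Ef k) ∧
        ∀ x : G, ∃ k, ∀ v ∈ Ef k, x * v * x⁻¹ ∈ S := by
    intro S
    by_cases h : IsOpen S ∧ (1 : G) ∈ S
    · obtain ⟨Ef, hEf⟩ := hnar.balanced h.1 h.2
      exact ⟨Ef, fun _ _ => hEf⟩
    · exact ⟨fun _ => Set.univ, fun h1 h2 => absurd ⟨h1, h2⟩ h⟩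
  choose E hE using hEex
  have hEo : ∀ S : Set G, IsOpen S → (1 : G) ∈ S → ∀ k, IsOpen (E S k) ∧ (1 : G) ∈ E S k :=
    fun S h1 h2 => (hE S h1 h2).1
  set W : ℕ → Set G := buildW R E T with hWdef
  have hR' : ∀ S : Set G, IsOpen S → (1 : G) ∈ S →
      IsOpen (R S) ∧ (1 : G) ∈ R S ∧ (R S)⁻¹ = R S ∧ R S * R S ⊆ S := hR
  have hWb : ∀ s, IsOpen (W s) ∧ (1 : G) ∈ W s ∧ (W s)⁻¹ = W s :=
    buildW_basic R E T hR' hEo hT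
  obtain ⟨hsq0, hsq⟩ := buildW_sq R E T hR' hEo hT
  rw [← hWdef] at hsq0 hsq
  -- monotonicity and related containments
  have hWsucc : ∀ n, W (n + 1) ⊆ W n := by
    intro n x hx
    have h := (hsq n (Set.mul_mem_mul hx (hWb (n + 1)).2.1)).1.1
    rwa [mul_one] at h
  have hWmono : Antitone W := antitone_nat_of_succ_le hWsucc
  have hWT : ∀ n, W n ⊆ T n := by
    intro n x hx
    cases n with
    | zero =>
      have h := hsq0 (Set.mul_mem_mul hx (hWb 0).2.1)
      rwa [mul_one] at h
    | succ m =>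
      have h := (hsq m (Set.mul_mem_mul hx (hWb (m + 1)).2.1)).1.2
      rwa [mul_one] at h
  have hWU : ∀ n, W n ⊆ U' n := fun n => (hWT n).trans (hTU n)
  have hclW : ∀ s, closure (W (s + 1)) ⊆ W s := by
    intro s x hx
    have hnhd : {x} * W (s + 1) ∈ nhds x :=
      ((hWb (s + 1)).1.mul_left).mem_nhds ⟨x, rfl, 1, (hWb (s + 1)).2.1, mul_one x⟩
    obtain ⟨y, ⟨x', hx', w, hw, hxy⟩, hy⟩ := mem_closure_iff_nhds.1 hx _ hnhd
    rw [Set.mem_singleton_iff] at hx'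
    have hxw : x * w = y := hx' ▸ hxy
    have hxeq : x = y * w⁻¹ := by rw [← hxw]; group
    have hwinv : w⁻¹ ∈ W (s + 1) := by
      rw [← (hWb (s + 1)).2.2]; exact Set.inv_mem_inv.2 hw
    rw [hxeq]
    exact (hsq s (Set.mul_mem_mul hy hwinv)).1.1
  -- the subgroup
  set H : Subgroup G :=
    { carrier := ⋂ n, W n
      one_mem' := Set.mem_iInter.2 fun n => (hWb n).2.1
      mul_mem' := fun {a b} ha hb => Set.mem_iInter.2 fun n =>
        (hsq n (Set.mul_mem_mul (Set.mem_iInter.1 ha (n + 1))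
          (Set.mem_iInter.1 hb (n + 1)))).1.1
      inv_mem' := fun {a} ha => Set.mem_iInter.2 fun n => by
        rw [← (hWb n).2.2]; exact Set.inv_mem_inv.2 (Set.mem_iInter.1 ha n) } with hHdef
  have hHset : (H : Set G) = ⋂ n, W n := rfl
  have hHsubW : ∀ n, (H : Set G) ⊆ W n := fun n x hx => Set.mem_iInter.1 hx n
  have hNormal : H.Normal := by
    constructor
    intro h hh g
    have : ∀ n, g * h * g⁻¹ ∈ W n := by
      intro n
      obtain ⟨k, hk⟩ := (hE (W n) (hWb n).1 (hWb n).2.1).2 g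
      apply hk
      have hws := hsq (Nat.pair n k)
      have hmem := (hws (Set.mul_mem_mul (hHsubW (Nat.pair n k + 1) hh)
        (hWb (Nat.pair n k + 1)).2.1)).2
      simpa [Nat.unpair_pair] using hmem
    exact Set.mem_iInter.2 this
  have hHclosed : IsClosed (H : Set G) := by
    have heq : (H : Set G) = ⋂ n, closure (W (n + 1)) := by
      apply Set.Subset.antisymm
      · exact fun x hx => Set.mem_iInter.2 fun n => subset_closure (hHsubW (n + 1) hx)
      · exact fun x hx => Set.mem_iInter.2 fun n => hclW n (Set.mem_iInter.1 hx n)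
    rw [heq]
    exact isClosed_iInter fun n => isClosed_closure
  have hHsubO : (H : Set G) ⊆ O := fun x hx => ((hWT 0) (hHsubW 0 hx)).1
  -- limits of selections lie in H
  have hlimH : ∀ (w : ℕ → G) (p : G) (φ : ℕ → ℕ), StrictMono φ → (∀ k, w k ∈ W k) →
      Filter.Tendsto (w ∘ φ) Filter.atTop (nhds p) → p ∈ (H : Set G) := by
    intro w p φ hφ hw ht
    refine Set.mem_iInter.2 fun m => ?_
    have hev : ∀ᶠ k in Filter.atTop, (w ∘ φ) k ∈ closure (W (m + 1)) := by
      rw [Filter.eventually_atTop]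
      exact ⟨m + 1, fun k hk => subset_closure
        (hWmono (hk.trans hφ.le_apply) (hw (φ k)))⟩
    exact hclW m (isClosed_closure.mem_of_tendsto ht hev)
  have hHseq : IsSeqCompact (H : Set G) := by
    intro u hu
    obtain ⟨p, φ, hφ, ht⟩ := hU's u fun n => hWU n (hHsubW n (hu n))
    exact ⟨p, hlimH u p φ hφ (fun k => hHsubW k (hu k)) ht, φ, hφ, ht⟩
  -- the selection lemma
  have hsel : ∀ u : ℕ → G, (∀ n, u n ∈ W n * (H : Set G)) →
      ∃ c ∈ (H : Set G), ∃ σ : ℕ → ℕ, StrictMono σ ∧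
        Filter.Tendsto (u ∘ σ) Filter.atTop (nhds c) := by
    intro u hu
    have hex : ∀ n, ∃ a, a ∈ W n ∧ ∃ b, b ∈ (H : Set G) ∧ a * b = u n := by
      intro n
      obtain ⟨a, ha, b, hb, hab⟩ := hu n
      exact ⟨a, ha, b, hb, hab⟩
    choose w hw h hh hwh using hex
    obtain ⟨p, φ, hφ, ht⟩ := hU's w fun n => hWU n (hw n)
    have hp : p ∈ (H : Set G) := hlimH w p φ hφ hw ht
    obtain ⟨c, hc, ψ, hψ, htc⟩ := hHseq (x := fun k => h (φ k)) fun k => hh (φ k)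
    refine ⟨p * c, H.mul_mem hp hc, φ ∘ ψ, hφ.comp hψ, ?_⟩
    have h1 : Filter.Tendsto (fun k => w (φ (ψ k)) * h (φ (ψ k))) Filter.atTop
        (nhds (p * c)) := (ht.comp hψ.tendsto_atTop).mul htc
    exact h1.congr fun k => hwh _
  set V : ℕ → Set G := fun n => W n * (H : Set G) with hVdef
  have hVopen : ∀ n, IsOpen (V n) := fun n => (hWb n).1.mul_right
  have hHsubV : ∀ n, (H : Set G) ⊆ V n := fun n x hx =>
    ⟨1, (hWb n).2.1, x, hx, one_mul x⟩
  have hVchar : ∀ Wo : Set G, IsOpen Wo → (H : Set G) ⊆ Wo → ∃ n, V n ⊆ Wo := by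
    intro Wo hWo hHWo
    by_contra hcon
    push_neg at hcon
    have hpick : ∀ n, ∃ x, x ∈ V n ∧ x ∉ Wo := by
      intro n
      obtain ⟨x, hx1, hx2⟩ := Set.not_subset.1 (hcon n)
      exact ⟨x, hx1, hx2⟩
    choose u hu1 hu2 using hpick
    obtain ⟨c, hc, σ, hσ, htc⟩ := hsel u hu1
    have : c ∈ Woᶜ := hWo.isClosed_compl.mem_of_tendsto htc
      (Filter.Eventually.of_forall fun k => hu2 (σ k))
    exact this (hHWo hc)
  have hHH : (H : Set G) * (H : Set G) = (H : Set G) := by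
    apply Set.Subset.antisymm
    · rintro x ⟨a, ha, b, hb, rfl⟩
      exact H.mul_mem ha hb
    · exact fun x hx => ⟨x, hx, 1, H.one_mem, mul_one x⟩
  have hVH : ∀ n, V n * (H : Set G) = V n := by
    intro n
    rw [hVdef]
    rw [mul_assoc, hHH]
  -- closedness of saturations of closed sets
  have hsatclosed : ∀ F : Set G, IsClosed F → IsClosed (F * (H : Set G)) := by
    intro F hF
    apply isClosed_of_closure_subset
    intro g hg
    have hzex : ∀ n, ∃ z ∈ W n * (H : Set G), g * z ∈ F := by
      intro n
      have hnhd : {g} * V n ∈ nhds g :=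
        ((hVopen n).mul_left).mem_nhds ⟨g, rfl, 1, hHsubV n H.one_mem, mul_one g⟩
      obtain ⟨x, hx1, hx2⟩ := mem_closure_iff_nhds.1 hg _ hnhd
      obtain ⟨a, ha, v, hv, hav⟩ := hx1
      rw [Set.mem_singleton_iff] at ha
      have hav' : g * v = x := ha ▸ hav
      obtain ⟨f, hf, h', hh', hfh⟩ := hx2
      obtain ⟨w, hw, k, hk, hwk⟩ := hv
      have hwk' : w * k = v := hwk
      have hfh' : f * h' = x := hfh
      refine ⟨w * (k * h'⁻¹), ⟨w, hw, k * h'⁻¹, H.mul_mem hk (H.inv_mem hh'), rfl⟩, ?_⟩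
      have heq : g * (w * (k * h'⁻¹)) = f := by
        rw [show g * (w * (k * h'⁻¹)) = g * (w * k) * h'⁻¹ by group, hwk', hav', ← hfh',
          mul_inv_cancel_right]
      rw [heq]
      exact hf
    choose z hz hgz using hzex
    obtain ⟨c, hc, σ, hσ, htc⟩ := hsel z hz
    have hgc : g * c ∈ F := by
      have h1 : Filter.Tendsto (fun k => g * z (σ k)) Filter.atTop (nhds (g * c)) :=
        tendsto_const_nhds.mul htc
      exact hF.mem_of_tendsto h1 (Filter.Eventually.of_forall fun k => hgz (σ k))
    exact ⟨g * c, hgc, c⁻¹, H.inv_mem hc, by simp⟩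
  have hclosedmap : IsClosedMap (QuotientGroup.mk : G → G ⧸ H) := by
    intro F hF
    rw [← (QuotientGroup.isQuotientMap_mk H).isClosed_preimage,
      QuotientGroup.preimage_image_mk_eq_mul]
    exact hsatclosed F hF
  -- strong sequential perfectness
  have hperfect : ∀ F : Set (G ⧸ H), IsSeqCompact F →
      IsSeqCompact ((QuotientGroup.mk : G → G ⧸ H) ⁻¹' F) := by
    intro F hFsc u hu
    obtain ⟨q, hqF, φ, hφ, htq⟩ := hFsc (x := fun n => QuotientGroup.mk (u n)) hu
    obtain ⟨g, rfl⟩ := QuotientGroup.mk_surjective q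
    have hnb : ∀ n, ∀ᶠ k in Filter.atTop, u (φ k) ∈ {g} * V n := by
      intro n
      have hopen : IsOpen ((QuotientGroup.mk : G → G ⧸ H) '' ({g} * V n)) :=
        QuotientGroup.isOpenMap_coe _ ((hVopen n).mul_left)
      have hmem : (QuotientGroup.mk g : G ⧸ H) ∈
          (QuotientGroup.mk : G → G ⧸ H) '' ({g} * V n) :=
        ⟨g, ⟨g, rfl, 1, hHsubV n H.one_mem, mul_one g⟩, rfl⟩
      filter_upwards [htq.eventually (hopen.mem_nhds hmem)] with k hk
      have hpre : u (φ k) ∈ (QuotientGroup.mk : G → G ⧸ H) ⁻¹'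
          ((QuotientGroup.mk : G → G ⧸ H) '' ({g} * V n)) := hk
      rwa [QuotientGroup.preimage_image_mk_eq_mul, mul_assoc, hVH n] at hpre
    have hNfex : ∀ n, ∃ N, ∀ k ≥ N, u (φ k) ∈ {g} * V n := fun n =>
      Filter.eventually_atTop.1 (hnb n)
    choose Nf hNf using hNfex
    set ψ : ℕ → ℕ := fun n => Nat.rec (Nf 0) (fun m pm => max (Nf (m + 1)) (pm + 1)) n
      with hψdef
    have hψsucc : ∀ n, ψ (n + 1) = max (Nf (n + 1)) (ψ n + 1) := fun n => rfl
    have hψmono : StrictMono ψ := strictMono_nat_of_lt_succ fun n => by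
      rw [hψsucc n]
      exact lt_of_lt_of_le (Nat.lt_succ_self _) (le_max_right _ _)
    have hψNf : ∀ n, Nf n ≤ ψ n := by
      intro n
      cases n with
      | zero => exact le_rfl
      | succ m => rw [hψsucc m]; exact le_max_left _ _
    have hzmem : ∀ n, g⁻¹ * u (φ (ψ n)) ∈ V n := by
      intro n
      obtain ⟨a, ha, v, hv, hav⟩ := hNf n (ψ n) (hψNf n)
      rw [Set.mem_singleton_iff] at ha
      have hav' : g * v = u (φ (ψ n)) := ha ▸ hav
      rw [← hav', inv_mul_cancel_left]
      exact hv
    obtain ⟨c, hc, σ, hσ, htc⟩ := hsel (fun n => g⁻¹ * u (φ (ψ n))) hzmem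
    refine ⟨g * c, ?_, φ ∘ (ψ ∘ σ), hφ.comp (hψmono.comp hσ), ?_⟩
    · show QuotientGroup.mk (g * c) ∈ F
      rwa [QuotientGroup.mk_mul_of_mem g hc]
    · have h1 : Filter.Tendsto (fun k => g * (g⁻¹ * u (φ (ψ (σ k))))) Filter.atTop
        (nhds (g * c)) := tendsto_const_nhds.mul htc
      exact h1.congr fun k => by simp [Function.comp]
  -- topological structure of the quotient
  haveI : H.Normal := hNormal
  haveI : IsClosed (H : Set G) := hHclosed
  have hbas : (nhds (1 : G ⧸ H)).HasBasis (fun _ : ℕ => True)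
      (fun n => (QuotientGroup.mk : G → G ⧸ H) '' V n) := by
    refine Filter.hasBasis_iff.mpr fun S => ⟨?_, ?_⟩
    · intro hS
      obtain ⟨Ob, hObS, hObo, hOb1⟩ := mem_nhds_iff.1 hS
      have hpre : (H : Set G) ⊆ (QuotientGroup.mk : G → G ⧸ H) ⁻¹' Ob := by
        intro h hh
        show (QuotientGroup.mk h : G ⧸ H) ∈ Ob
        rw [(QuotientGroup.eq_one_iff h).2 hh]
        exact hOb1
      obtain ⟨n, hn⟩ := hVchar _ (hObo.preimage continuous_quot_mk) hpre
      exact ⟨n, trivial, ((Set.image_mono hn).trans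
        (Set.image_preimage_subset _ _)).trans hObS⟩
    · rintro ⟨n, -, hn⟩
      refine Filter.mem_of_superset ?_ hn
      have hopen : IsOpen ((QuotientGroup.mk : G → G ⧸ H) '' V n) :=
        QuotientGroup.isOpenMap_coe _ (hVopen n)
      exact hopen.mem_nhds ⟨1, hHsubV n H.one_mem, rfl⟩
  haveI : (nhds (1 : G ⧸ H)).IsCountablyGenerated := hbas.isCountablyGenerated
  have hmetr : MetrizableSpace (G ⧸ H) := metrizable_of_topGroup
  -- separability
  have hAex : ∀ n, ∃ A : Set G, A.Countable ∧ A * W n = Set.univ := fun n =>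
    hnar (W n) (hWb n).1 (hWb n).2.1
  choose A hAc hAu using hAex
  have hsep : SeparableSpace (G ⧸ H) := by
    refine ⟨⟨(QuotientGroup.mk : G → G ⧸ H) '' ⋃ n, A n,
      ((Set.countable_iUnion hAc).image _), ?_⟩⟩
    rw [dense_iff_inter_open]
    rintro Ob hObo ⟨q, hq⟩
    obtain ⟨g, rfl⟩ := QuotientGroup.mk_surjective q
    have hHsub : (H : Set G) ⊆ {g⁻¹} * ((QuotientGroup.mk : G → G ⧸ H) ⁻¹' Ob) := by
      intro h hh
      refine ⟨g⁻¹, rfl, g * h, ?_, by group⟩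
      show (QuotientGroup.mk (g * h) : G ⧸ H) ∈ Ob
      rwa [QuotientGroup.mk_mul_of_mem g hh]
    obtain ⟨n, hn⟩ := hVchar _ ((hObo.preimage continuous_quot_mk).mul_left) hHsub
    have hg : g ∈ A n * W n := by rw [hAu n]; trivial
    obtain ⟨a, ha, s, hs, has⟩ := hg
    have hsV : s⁻¹ ∈ V n := ⟨s⁻¹, by rw [← (hWb n).2.2]; exact Set.inv_mem_inv.2 hs,
      1, H.one_mem, mul_one _⟩
    obtain ⟨b, hb, p', hp', hbp⟩ := hn hsV
    rw [Set.mem_singleton_iff] at hb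
    have hbp' : g⁻¹ * p' = s⁻¹ := hb ▸ hbp
    have hap : a = p' := by
      have h1 : a = g * s⁻¹ := eq_mul_inv_of_mul_eq (by simpa using has)
      have h2 : p' = g * s⁻¹ := by rw [← hbp']; group
      rw [h1, h2]
    refine ⟨QuotientGroup.mk a, ⟨?_, ⟨a, Set.mem_iUnion.2 ⟨n, ha⟩, rfl⟩⟩⟩
    rw [hap]
    exact hp'
  -- strong q-sequences at points of H
  have hqseq : ∀ y ∈ (H : Set G), IsStrongQSequenceAt y V := by
    intro y hy
    refine ⟨fun n => ⟨hVopen n, hHsubV n hy⟩, fun u hu => ?_⟩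
    obtain ⟨c, _, σ, hσ, htc⟩ := hsel u hu
    exact ⟨c, σ, hσ, htc⟩
  exact ⟨H, V, hNormal, hHclosed, hHseq, fun n => ⟨hVopen n, hHsubV n⟩, hVchar, hHsubO,
    hqseq, hclosedmap, hperfect, hsep, hmetr⟩

theorem omegaNarrow_and_strongQSpace_iff (G : Type*) [Group G] [TopologicalSpace G] [IsTopologicalGroup G] [T2Space G] :
    (OmegaNarrow G ∧ StrongQSpace G) ↔
      ∀ O : Set G, IsOpen O → (1 : G) ∈ O →
        ∃ (H : Subgroup G) (V : ℕ → Set G), H.Normal ∧ IsClosed (H : Set G) ∧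
          IsSeqCompact (H : Set G) ∧
          (∀ n, IsOpen (V n) ∧ (H : Set G) ⊆ V n) ∧
          (∀ W : Set G, IsOpen W → (H : Set G) ⊆ W → ∃ n, V n ⊆ W) ∧
          (H : Set G) ⊆ O ∧
          (∀ y ∈ (H : Set G), IsStrongQSequenceAt y V) ∧
          IsClosedMap (QuotientGroup.mk : G → G ⧸ H) ∧
          (∀ F : Set (G ⧸ H), IsSeqCompact F →
            IsSeqCompact ((QuotientGroup.mk : G → G ⧸ H) ⁻¹' F)) ∧
          SeparableSpace (G ⧸ H) ∧ MetrizableSpace (G ⧸ H) := by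
  constructor
  · rintro ⟨hnar, hqsp⟩ O hO hO1
    exact forward_part hnar hqsp hO hO1
  · intro hyp
    constructor
    · -- ω-narrowness
      intro Vo hVo hVo1
      obtain ⟨S, hSo, hS1, hSs, hSS⟩ := exists_sym_sq hVo hVo1
      obtain ⟨H, V, hN, hHcl, hHsc, hVn, hVchar, hHS, hq, hclosed, hperf, hsep, hmetr⟩ :=
        hyp S hSo hS1
      haveI := hsep
      obtain ⟨D, hDc, hDd⟩ := TopologicalSpace.exists_countable_dense (G ⧸ H)
      choose rep hrep using fun d : G ⧸ H => QuotientGroup.mk_surjective d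
      refine ⟨rep '' D, hDc.image rep, ?_⟩
      apply Set.eq_univ_of_forall
      intro g
      have hopen : IsOpen ((QuotientGroup.mk : G → G ⧸ H) '' ({g} * S)) :=
        QuotientGroup.isOpenMap_coe _ hSo.mul_left
      have hne : ((QuotientGroup.mk : G → G ⧸ H) '' ({g} * S)).Nonempty :=
        ⟨QuotientGroup.mk g, g, ⟨g, rfl, 1, hS1, mul_one g⟩, rfl⟩
      obtain ⟨d, hdD, hdmem⟩ := hDd.exists_mem_open hopen hne
      obtain ⟨x, hx, hxd⟩ := hdmem
      obtain ⟨g', hg', s, hs, hgs⟩ := hx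
      rw [Set.mem_singleton_iff] at hg'
      have hgs' : g * s = x := hg' ▸ hgs
      have hmk : (QuotientGroup.mk (rep d) : G ⧸ H) = QuotientGroup.mk x := by
        rw [hrep d, hxd]
      have hH : (rep d)⁻¹ * x ∈ H := QuotientGroup.eq.mp hmk
      have hsinv : s⁻¹ ∈ S := by rw [← hSs]; exact Set.inv_mem_inv.2 hs
      refine ⟨rep d, Set.mem_image_of_mem rep hdD, (rep d)⁻¹ * x * s⁻¹,
        hSS (Set.mul_mem_mul (hHS hH) hsinv), ?_⟩
      have hgx : g = x * s⁻¹ := eq_mul_inv_of_mul_eq hgs'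
      rw [hgx]
      group
    · -- strong q-space
      intro x
      obtain ⟨H, V, hN, hHcl, hHsc, hVn, hVchar, hHO, hq, -⟩ :=
        hyp Set.univ isOpen_univ trivial
      have h1 := hq 1 H.one_mem
      refine ⟨fun n => {x} * V n,
        ⟨fun n => ⟨(h1.1 n).1.mul_left, ⟨x, rfl, 1, (h1.1 n).2, mul_one x⟩⟩, ?_⟩⟩
      intro u hu
      have hu' : ∀ n, x⁻¹ * u n ∈ V n := by
        intro n
        obtain ⟨a, ha, v, hv, hav⟩ := hu n
        rw [Set.mem_singleton_iff] at ha
        have hxv : x * v = u n := ha ▸ hav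
        rw [← hxv, inv_mul_cancel_left]
        exact hv
      obtain ⟨p, φ, hφ, ht⟩ := h1.2 (fun n => x⁻¹ * u n) hu'
      refine ⟨x * p, φ, hφ, ?_⟩
      have h2 : Filter.Tendsto (fun k => x * (x⁻¹ * u (φ k))) Filter.atTop
          (nhds (x * p)) := tendsto_const_nhds.mul ht
      exact h2.congr fun k => by simp [Function.comp]
end
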